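/- arXiv:1611.06380 — 5 statements merged into one kernel-verified Lean document; each statement's English description precedes it below -/
import Mathlib

section
/- Let $a\in\mathcal W$ with $a'\in\mathcal W$ (i.e. $\sum_k |k a_k|<\infty$). Then for every $k\ge 1$, $\|H(a_-)H((a^{k-1})_+)\|_{\mathcal F}\le (k-1)\|a\|_{\mathcal W}^{k-2}\|a'\|_{\mathcal W}^2$. -/
open scoped BigOperators

noncomputable section

/-- The ℱ-norm of a semi-infinite matrix: sum of absolute values of all entries. -/
def Fnorm (S : ℕ → ℕ → ℂ) : ℝ := ∑' p : ℕ × ℕ, ‖S p.1 p.2‖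

/-- Membership in ℱ: absolutely summable entries. -/
def MemF (S : ℕ → ℕ → ℂ) : Prop := Summable (fun p : ℕ × ℕ => ‖S p.1 p.2‖)

/-- Product of semi-infinite matrices, entrywise by (absolutely convergent) series. -/
def matMul (A B : ℕ → ℕ → ℂ) : ℕ → ℕ → ℂ := fun i j => ∑' r : ℕ, A i r * B r j

/-- The identity semi-infinite matrix. -/
def idMat : ℕ → ℕ → ℂ := fun i j => if i = j then 1 else 0

/-- Powers of a semi-infinite matrix. -/
def matPow (A : ℕ → ℕ → ℂ) : ℕ → (ℕ → ℕ → ℂ)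
  | 0 => idMat
  | n + 1 => matMul A (matPow A n)

/-- Wiener norm: sum of moduli of the coefficients. -/
def Wnorm (a : ℤ → ℂ) : ℝ := ∑' k : ℤ, ‖a k‖

/-- Membership in the Wiener algebra. -/
def MemW (a : ℤ → ℂ) : Prop := Summable (fun k : ℤ => ‖a k‖)

/-- Wiener norm of the derivative: ∑ |k| |a_k|. -/
def Wnorm' (a : ℤ → ℂ) : ℝ := ∑' k : ℤ, |(k : ℝ)| * ‖a k‖

/-- The derivative has coefficients in the Wiener algebra. -/
def MemW' (a : ℤ → ℂ) : Prop := Summable (fun k : ℤ => |(k : ℝ)| * ‖a k‖)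

/-- The semi-infinite Toeplitz matrix of symbol `a` (0-based indexing): entry (i,j) is a_{j-i}. -/
def Toep (a : ℤ → ℂ) : ℕ → ℕ → ℂ := fun i j => a ((j : ℤ) - (i : ℤ))

/-- Hankel matrix of the strictly negative part of `a`: H(a₋), entry (i,j) = a_{-(i+j-1)} (1-based),
i.e. a_{-(i+j+1)} in 0-based indexing. -/
def Hminus (a : ℤ → ℂ) : ℕ → ℕ → ℂ := fun i j => a (-((i : ℤ) + (j : ℤ) + 1))

/-- Hankel matrix of the strictly positive part of `a`: H(a₊), entry (i,j) = a_{i+j-1} (1-based),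
i.e. a_{i+j+1} in 0-based indexing. -/
def Hplus (a : ℤ → ℂ) : ℕ → ℕ → ℂ := fun i j => a ((i : ℤ) + (j : ℤ) + 1)

/-- Product (convolution) in the Wiener algebra. -/
def convW (a b : ℤ → ℂ) : ℤ → ℂ := fun k => ∑' j : ℤ, a j * b (k - j)

/-- Powers in the Wiener algebra. -/
def powW (a : ℤ → ℂ) : ℕ → (ℤ → ℂ)
  | 0 => fun k => if k = 0 then 1 else 0
  | n + 1 => convW a (powW a n)

/-- Exponential in the Wiener algebra, coefficientwise. -/
def expW (a : ℤ → ℂ) : ℤ → ℂ := fun k => ∑' m : ℕ, (m.factorial : ℂ)⁻¹ * powW a m k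

section Aux
set_option maxHeartbeats 1000000

open Function

lemma Wnorm_nonneg (a : ℤ → ℂ) : 0 ≤ Wnorm a :=
  tsum_nonneg fun _ => norm_nonneg _

lemma Wnorm'_nonneg (a : ℤ → ℂ) : 0 ≤ Wnorm' a :=
  tsum_nonneg fun _ => mul_nonneg (abs_nonneg _) (norm_nonneg _)

/-- The shear equivalence on ℤ × ℤ. -/
def shear : ℤ × ℤ ≃ ℤ × ℤ where
  toFun p := (p.2, p.1 - p.2)
  invFun p := (p.1 + p.2, p.1)
  left_inv p := by simp
  right_inv p := by simp

lemma prod_mul_summable {u v : ℤ → ℝ} (hu : Summable u) (hv : Summable v)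
    (hu0 : ∀ i, 0 ≤ u i) (hv0 : ∀ i, 0 ≤ v i) :
    Summable (fun p : ℤ × ℤ => u p.2 * v (p.1 - p.2)) := by
  have h : Summable (fun p : ℤ × ℤ => u p.1 * v p.2) :=
    hu.mul_of_nonneg hv hu0 hv0
  have h2 := (shear.summable_iff (f := fun p : ℤ × ℤ => u p.1 * v p.2)).mpr h
  exact h2.congr (fun p => by simp [shear, Function.comp])

lemma prod_mul_tsum {u v : ℤ → ℝ} (hu : Summable u) (hv : Summable v)
    (hu0 : ∀ i, 0 ≤ u i) (hv0 : ∀ i, 0 ≤ v i) :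
    ∑' p : ℤ × ℤ, u p.2 * v (p.1 - p.2) = (∑' i, u i) * (∑' i, v i) := by
  have h : Summable (fun p : ℤ × ℤ => u p.1 * v p.2) :=
    hu.mul_of_nonneg hv hu0 hv0
  have h0 : ∑' p : ℤ × ℤ, u p.2 * v (p.1 - p.2)
      = ∑' p : ℤ × ℤ, (fun q : ℤ × ℤ => u q.1 * v q.2) (shear p) :=
    tsum_congr (fun p => by simp [shear])
  have h1 : ∑' p : ℤ × ℤ, (fun q : ℤ × ℤ => u q.1 * v q.2) (shear p)
      = ∑' p : ℤ × ℤ, u p.1 * v p.2 :=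
    shear.tsum_eq (fun q : ℤ × ℤ => u q.1 * v q.2)
  have hsl : ∀ b : ℤ, Summable (fun c : ℤ => u b * v c) := fun b => hv.mul_left (u b)
  rw [h0, h1, Summable.tsum_prod' h hsl]
  simp_rw [tsum_mul_left, tsum_mul_right]

lemma conv_slice_summable {a b : ℤ → ℂ} (ha : MemW a) (hb : MemW b) (K : ℤ) :
    Summable (fun j : ℤ => ‖a j‖ * ‖b (K - j)‖) := by
  have hF := prod_mul_summable (u := fun i => ‖a i‖) (v := fun i => ‖b i‖) ha hb
    (fun _ => norm_nonneg _) (fun _ => norm_nonneg _)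
  exact ((summable_prod_of_nonneg
    (fun p => mul_nonneg (norm_nonneg _) (norm_nonneg _))).mp hF).1 K

lemma conv_norm_le {a b : ℤ → ℂ} (ha : MemW a) (hb : MemW b) (K : ℤ) :
    ‖convW a b K‖ ≤ ∑' j : ℤ, ‖a j‖ * ‖b (K - j)‖ := by
  have hs : Summable (fun j : ℤ => ‖a j * b (K - j)‖) :=
    (conv_slice_summable ha hb K).congr (fun j => (norm_mul _ _).symm)
  calc ‖convW a b K‖ ≤ ∑' j : ℤ, ‖a j * b (K - j)‖ := norm_tsum_le_tsum_norm hs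
    _ = ∑' j : ℤ, ‖a j‖ * ‖b (K - j)‖ := tsum_congr fun j => norm_mul _ _

lemma conv_bounds {a b : ℤ → ℂ} (ha : MemW a) (hb : MemW b) :
    MemW (convW a b) ∧ Wnorm (convW a b) ≤ Wnorm a * Wnorm b := by
  have hF := prod_mul_summable (u := fun i => ‖a i‖) (v := fun i => ‖b i‖) ha hb
    (fun _ => norm_nonneg _) (fun _ => norm_nonneg _)
  have hiter := (summable_prod_of_nonneg
    (f := fun p : ℤ × ℤ => ‖a p.2‖ * ‖b (p.1 - p.2)‖)
    (fun p => mul_nonneg (norm_nonneg _) (norm_nonneg _))).mp hF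
  have hmem : MemW (convW a b) :=
    Summable.of_nonneg_of_le (fun _ => norm_nonneg _) (conv_norm_le ha hb) hiter.2
  refine ⟨hmem, ?_⟩
  calc Wnorm (convW a b) ≤ ∑' K : ℤ, ∑' j : ℤ, ‖a j‖ * ‖b (K - j)‖ :=
        Summable.tsum_le_tsum (conv_norm_le ha hb) hmem hiter.2
    _ = ∑' p : ℤ × ℤ, ‖a p.2‖ * ‖b (p.1 - p.2)‖ := (Summable.tsum_prod' hF hiter.1).symm
    _ = Wnorm a * Wnorm b :=
        prod_mul_tsum (u := fun i => ‖a i‖) (v := fun i => ‖b i‖) ha hb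
          (fun _ => norm_nonneg _) (fun _ => norm_nonneg _)

lemma conv_bounds' {a b : ℤ → ℂ} (ha : MemW a) (ha' : MemW' a) (hb : MemW b)
    (hb' : MemW' b) :
    MemW' (convW a b) ∧
      Wnorm' (convW a b) ≤ Wnorm' a * Wnorm b + Wnorm a * Wnorm' b := by
  set M : ℤ × ℤ → ℝ := fun p =>
    (|(p.2 : ℝ)| * ‖a p.2‖) * ‖b (p.1 - p.2)‖ +
      ‖a p.2‖ * (|((p.1 - p.2 : ℤ) : ℝ)| * ‖b (p.1 - p.2)‖) with hMdef
  have hM1 : Summable (fun p : ℤ × ℤ => (|(p.2 : ℝ)| * ‖a p.2‖) * ‖b (p.1 - p.2)‖) :=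
    prod_mul_summable (u := fun i => |(i : ℝ)| * ‖a i‖) (v := fun i => ‖b i‖) ha' hb
      (fun i => mul_nonneg (abs_nonneg _) (norm_nonneg _)) (fun _ => norm_nonneg _)
  have hM2 : Summable (fun p : ℤ × ℤ => ‖a p.2‖ * (|((p.1 - p.2 : ℤ) : ℝ)| * ‖b (p.1 - p.2)‖)) :=
    prod_mul_summable (u := fun i => ‖a i‖) (v := fun i => |(i : ℝ)| * ‖b i‖) ha hb'
      (fun _ => norm_nonneg _) (fun i => mul_nonneg (abs_nonneg _) (norm_nonneg _))
  have hM : Summable M := hM1.add hM2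
  have hM0 : ∀ p, 0 ≤ M p := fun p => by
    apply add_nonneg <;>
      exact mul_nonneg (by positivity) (by positivity)
  have hMiter := (summable_prod_of_nonneg (f := M) hM0).mp hM
  -- pointwise bound
  have hpt : ∀ K : ℤ, |(K : ℝ)| * ‖convW a b K‖ ≤ ∑' j : ℤ, M (K, j) := by
    intro K
    have h1 : |(K : ℝ)| * ‖convW a b K‖ ≤ |(K : ℝ)| * ∑' j : ℤ, ‖a j‖ * ‖b (K - j)‖ :=
      mul_le_mul_of_nonneg_left (conv_norm_le ha hb K) (abs_nonneg _)
    have h2 : |(K : ℝ)| * ∑' j : ℤ, ‖a j‖ * ‖b (K - j)‖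
        = ∑' j : ℤ, |(K : ℝ)| * (‖a j‖ * ‖b (K - j)‖) := (tsum_mul_left).symm
    have h3 : ∑' j : ℤ, |(K : ℝ)| * (‖a j‖ * ‖b (K - j)‖) ≤ ∑' j : ℤ, M (K, j) := by
      apply Summable.tsum_le_tsum _ ((conv_slice_summable ha hb K).mul_left |(K : ℝ)|) (hMiter.1 K)
      intro j
      have habs : |(K : ℝ)| ≤ |(j : ℝ)| + |((K - j : ℤ) : ℝ)| := by
        push_cast
        have := abs_sub_abs_le_abs_sub (K : ℝ) (j : ℝ)
        have := abs_add_le (j : ℝ) ((K : ℝ) - j)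
        simp only [add_sub_cancel] at this
        linarith
      have hnn : (0:ℝ) ≤ ‖a j‖ * ‖b (K - j)‖ :=
        mul_nonneg (norm_nonneg _) (norm_nonneg _)
      have := mul_le_mul_of_nonneg_right habs hnn
      simp only [hMdef]
      ring_nf
      ring_nf at this
      linarith
    linarith [h1, h2.le, h3, h2.ge]
  have hmem : MemW' (convW a b) :=
    Summable.of_nonneg_of_le
      (fun K => mul_nonneg (abs_nonneg _) (norm_nonneg _)) hpt hMiter.2
  refine ⟨hmem, ?_⟩
  have hsum1 : ∑' p : ℤ × ℤ, (|(p.2 : ℝ)| * ‖a p.2‖) * ‖b (p.1 - p.2)‖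
      = Wnorm' a * Wnorm b :=
    prod_mul_tsum (u := fun i => |(i : ℝ)| * ‖a i‖) (v := fun i => ‖b i‖) ha' hb
      (fun i => mul_nonneg (abs_nonneg _) (norm_nonneg _)) (fun _ => norm_nonneg _)
  have hsum2 : ∑' p : ℤ × ℤ, ‖a p.2‖ * (|((p.1 - p.2 : ℤ) : ℝ)| * ‖b (p.1 - p.2)‖)
      = Wnorm a * Wnorm' b :=
    prod_mul_tsum (u := fun i => ‖a i‖) (v := fun i => |(i : ℝ)| * ‖b i‖) ha hb'
      (fun _ => norm_nonneg _) (fun i => mul_nonneg (abs_nonneg _) (norm_nonneg _))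
  calc Wnorm' (convW a b) ≤ ∑' K : ℤ, ∑' j : ℤ, M (K, j) :=
        Summable.tsum_le_tsum hpt hmem hMiter.2
    _ = ∑' p : ℤ × ℤ, M p := (Summable.tsum_prod' hM hMiter.1).symm
    _ = Wnorm' a * Wnorm b + Wnorm a * Wnorm' b := by
        rw [hMdef, Summable.tsum_add hM1 hM2, hsum1, hsum2]

lemma pow_bounds {a : ℤ → ℂ} (ha : MemW a) (ha' : MemW' a) (n : ℕ) :
    MemW (powW a n) ∧ Wnorm (powW a n) ≤ Wnorm a ^ n ∧
      MemW' (powW a n) ∧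
      Wnorm' (powW a n) ≤ (n : ℝ) * Wnorm a ^ (n - 1) * Wnorm' a := by
  induction n with
  | zero =>
    have hzero : (fun k : ℤ => |(k : ℝ)| * ‖powW a 0 k‖) = fun _ => (0:ℝ) := by
      funext k
      by_cases h : k = 0 <;> simp [powW, h]
    constructor
    · exact summable_of_ne_finset_zero (s := {(0:ℤ)}) (by intro k hk; simp at hk; simp [powW, hk])
    constructor
    · have : Wnorm (powW a 0) = 1 := by
        unfold Wnorm
        rw [tsum_eq_single (0:ℤ) (by intro k hk; simp [powW, hk])]
        simp [powW]
      rw [this]; simp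
    constructor
    · unfold MemW'; rw [hzero]; exact summable_zero
    · unfold Wnorm'; rw [hzero]; simp
  | succ n ih =>
    obtain ⟨h1, h2, h3, h4⟩ := ih
    have hc := conv_bounds ha h1
    have hc' := conv_bounds' ha ha' h1 h3
    have hWa := Wnorm_nonneg a
    have hWa' := Wnorm'_nonneg a
    refine ⟨hc.1, ?_, hc'.1, ?_⟩
    · calc Wnorm (powW a (n+1)) ≤ Wnorm a * Wnorm (powW a n) := hc.2
        _ ≤ Wnorm a * Wnorm a ^ n := mul_le_mul_of_nonneg_left h2 hWa
        _ = Wnorm a ^ (n + 1) := (pow_succ' _ _).symm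
    · have step1 : Wnorm' (powW a (n+1)) ≤ Wnorm' a * Wnorm (powW a n) +
          Wnorm a * Wnorm' (powW a n) := hc'.2
      have step2 : Wnorm' a * Wnorm (powW a n) ≤ Wnorm' a * Wnorm a ^ n :=
        mul_le_mul_of_nonneg_left h2 hWa'
      have step3 : Wnorm a * Wnorm' (powW a n) ≤
          Wnorm a * ((n : ℝ) * Wnorm a ^ (n - 1) * Wnorm' a) :=
        mul_le_mul_of_nonneg_left h4 hWa
      have step4 : Wnorm a * ((n : ℝ) * Wnorm a ^ (n - 1) * Wnorm' a) ≤
          (n : ℝ) * Wnorm a ^ n * Wnorm' a := by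
        rcases n with _ | m
        · simp
        · apply le_of_eq
          have : Wnorm a * Wnorm a ^ (m + 1 - 1) = Wnorm a ^ (m + 1) := by
            simp [pow_succ, mul_comm]
          calc Wnorm a * ((↑(m+1) : ℝ) * Wnorm a ^ (m + 1 - 1) * Wnorm' a)
              = (↑(m+1) : ℝ) * (Wnorm a * Wnorm a ^ (m + 1 - 1)) * Wnorm' a := by ring
            _ = (↑(m+1) : ℝ) * Wnorm a ^ (m + 1) * Wnorm' a := by rw [this]
      have hfin : (n : ℝ) * Wnorm a ^ n * Wnorm' a ≤ ((n:ℝ)+1) * Wnorm a ^ n * Wnorm' a := by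
        have : (0:ℝ) ≤ Wnorm a ^ n * Wnorm' a := by positivity
        nlinarith
      have : Wnorm' (powW a (n+1)) ≤ Wnorm' a * Wnorm a ^ n +
          (n : ℝ) * Wnorm a ^ n * Wnorm' a := by linarith
      calc Wnorm' (powW a (n+1)) ≤ Wnorm' a * Wnorm a ^ n +
            (n : ℝ) * Wnorm a ^ n * Wnorm' a := this
        _ = ((n : ℝ) + 1) * Wnorm a ^ n * Wnorm' a := by ring
        _ = ((n+1 : ℕ) : ℝ) * Wnorm a ^ ((n+1) - 1) * Wnorm' a := by push_cast; ring_nf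

/-- Tail sums of the negative part, summed over the starting index. -/
lemma tail_sum {c : ℤ → ℂ} (hc : MemW c) (hc' : MemW' c) :
    Summable (fun r : ℕ => ∑' i : ℕ, ‖c (-((i:ℤ) + (r:ℤ) + 1))‖) ∧
      ∑' r : ℕ, ∑' i : ℕ, ‖c (-((i:ℤ) + (r:ℤ) + 1))‖ ≤ Wnorm' c := by
  set G : ℤ × ℕ → ℝ := fun p => if (p.2:ℤ) + 1 ≤ -p.1 then ‖c p.1‖ else 0 with hGdef
  have hG0 : ∀ p, 0 ≤ G p := fun p => by
    simp only [hGdef]; split <;> positivity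
  have hGr : ∀ m : ℤ, (fun r : ℕ => G (m, r)) =
      fun r : ℕ => if r ∈ Finset.range (-m).toNat then ‖c m‖ else 0 := by
    intro m; funext r
    simp only [hGdef, Finset.mem_range]
    congr 1
    simp only [eq_iff_iff]
    omega
  have hGslice : ∀ m : ℤ, Summable (fun r : ℕ => G (m, r)) := by
    intro m; rw [hGr m]
    exact summable_of_ne_finset_zero (s := Finset.range (-m).toNat)
      (fun r hr => by simp [hr])
  have hGsum : ∀ m : ℤ, ∑' r : ℕ, G (m, r) = ((-m).toNat : ℝ) * ‖c m‖ := by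
    intro m; rw [hGr m]
    rw [tsum_eq_sum (s := Finset.range (-m).toNat) (fun r hr => by simp [hr])]
    rw [Finset.sum_congr rfl (fun r hr => if_pos hr)]
    simp [Finset.sum_const, Finset.card_range, nsmul_eq_mul]
  have hGle : ∀ m : ℤ, ∑' r : ℕ, G (m, r) ≤ |(m : ℝ)| * ‖c m‖ := by
    intro m; rw [hGsum m]
    apply mul_le_mul_of_nonneg_right _ (norm_nonneg _)
    have h1 : ((-m).toNat : ℤ) ≤ |m| := by
      rw [Int.abs_eq_natAbs]; omega
    calc ((-m).toNat : ℝ) = (((-m).toNat : ℤ) : ℝ) := by push_cast; ring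
      _ ≤ ((|m| : ℤ) : ℝ) := by exact_mod_cast h1
      _ = |(m : ℝ)| := by push_cast; ring
  have hGsumm : Summable (fun m : ℤ => ∑' r : ℕ, G (m, r)) :=
    Summable.of_nonneg_of_le (fun m => tsum_nonneg fun r => hG0 _) hGle hc'
  have hG : Summable G := (summable_prod_of_nonneg hG0).mpr ⟨hGslice, hGsumm⟩
  -- identify tails with columns of G
  have hcol : ∀ r : ℕ, ∑' i : ℕ, ‖c (-((i:ℤ) + (r:ℤ) + 1))‖ = ∑' m : ℤ, G (m, r) := by
    intro r
    have hinj : Function.Injective (fun n : ℕ => -((n:ℤ) + (r:ℤ) + 1)) := by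
      intro x y h; simp only at h; omega
    have hsupp : Function.support (fun m : ℤ => G (m, r)) ⊆
        Set.range (fun n : ℕ => -((n:ℤ) + (r:ℤ) + 1)) := by
      intro m hm
      simp only [hGdef, Function.mem_support] at hm
      have hcond : (r:ℤ) + 1 ≤ -m := by
        by_contra hc2
        exact hm (if_neg hc2)
      exact ⟨(-m - r - 1).toNat, by simp; omega⟩
    have := hinj.tsum_eq (f := fun m : ℤ => G (m, r)) hsupp
    rw [← this]
    apply tsum_congr
    intro n
    simp only [hGdef]
    rw [if_pos (by omega)]
  -- swap coordinates
  have hG' : Summable (fun q : ℕ × ℤ => G (q.2, q.1)) := by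
    have h2 := ((Equiv.prodComm ℕ ℤ).summable_iff (f := G)).mpr hG
    exact h2.congr (fun p => rfl)
  have hiter := (summable_prod_of_nonneg (f := fun q : ℕ × ℤ => G (q.2, q.1))
    (fun q => hG0 _)).mp hG'
  constructor
  · apply hiter.2.congr
    intro r
    exact (hcol r).symm
  · calc ∑' r : ℕ, ∑' i : ℕ, ‖c (-((i:ℤ) + (r:ℤ) + 1))‖
        = ∑' r : ℕ, ∑' m : ℤ, G (m, r) := tsum_congr hcol
      _ = ∑' q : ℕ × ℤ, G (q.2, q.1) := (Summable.tsum_prod' hG' hiter.1).symm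
      _ = ∑' q : ℕ × ℤ, G ((Equiv.prodComm ℕ ℤ) q) := tsum_congr (fun q => rfl)
      _ = ∑' p : ℤ × ℕ, G p := (Equiv.prodComm ℕ ℤ).tsum_eq G
      _ = ∑' m : ℤ, ∑' r : ℕ, G (m, r) := Summable.tsum_prod' hG hGslice
      _ ≤ Wnorm' c := Summable.tsum_le_tsum hGle hGsumm hc'

/-- The key Hankel product estimate. -/
lemma hankelF {a b : ℤ → ℂ} (ha : MemW a) (ha' : MemW' a) (hb : MemW b) (hb' : MemW' b) :
    MemF (matMul (Hminus a) (Hplus b)) ∧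
      Fnorm (matMul (Hminus a) (Hplus b)) ≤ Wnorm' a * Wnorm' b := by
  set A : ℕ → ℝ := fun r => ∑' i : ℕ, ‖a (-((i:ℤ) + (r:ℤ) + 1))‖ with hAdef
  set B : ℕ → ℝ := fun r => ∑' j : ℕ, ‖b ((r:ℤ) + (j:ℤ) + 1)‖ with hBdef
  have hA := tail_sum ha ha'
  have hA0 : ∀ r, 0 ≤ A r := fun r => tsum_nonneg fun _ => norm_nonneg _
  have hB0 : ∀ r, 0 ≤ B r := fun r => tsum_nonneg fun _ => norm_nonneg _
  have hAr : ∀ r : ℕ, Summable (fun i : ℕ => ‖a (-((i:ℤ) + (r:ℤ) + 1))‖) := by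
    intro r
    exact ha.comp_injective (i := fun i : ℕ => -((i:ℤ) + (r:ℤ) + 1))
      (fun x y h => by simp only at h; omega)
  have hBr : ∀ r : ℕ, Summable (fun j : ℕ => ‖b ((r:ℤ) + (j:ℤ) + 1)‖) := by
    intro r
    exact hb.comp_injective (i := fun j : ℕ => (r:ℤ) + (j:ℤ) + 1)
      (fun x y h => by simp only at h; omega)
  have hBle : ∀ r : ℕ, B r ≤ Wnorm' b := by
    intro r
    apply Summable.tsum_le_tsum_of_inj (fun j : ℕ => (r:ℤ) + (j:ℤ) + 1)
      (fun x y h => by simp only at h; omega)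
      (fun m _ => mul_nonneg (abs_nonneg _) (norm_nonneg _))
      _ (hBr r) hb'
    intro j
    have h1 : (1:ℝ) ≤ |(((r:ℤ) + (j:ℤ) + 1 : ℤ) : ℝ)| := by
      have : (1:ℤ) ≤ |(r:ℤ) + (j:ℤ) + 1| := by
        rw [abs_of_nonneg (by omega)]; omega
      exact_mod_cast this
    exact le_mul_of_one_le_left (norm_nonneg _) h1
  set U : ℕ × (ℕ × ℕ) → ℝ := fun p =>
    ‖a (-((p.2.1:ℤ) + (p.1:ℤ) + 1))‖ * ‖b ((p.1:ℤ) + (p.2.2:ℤ) + 1)‖ with hUdef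
  have hU0 : ∀ p, 0 ≤ U p := fun p => mul_nonneg (norm_nonneg _) (norm_nonneg _)
  have hUslice : ∀ r : ℕ, Summable (fun q : ℕ × ℕ => U (r, q)) := fun r =>
    (hAr r).mul_of_nonneg (hBr r) (fun _ => norm_nonneg _) (fun _ => norm_nonneg _)
  have hUsliceSum : ∀ r : ℕ, ∑' q : ℕ × ℕ, U (r, q) = A r * B r := by
    intro r
    have hsl : ∀ i : ℕ, Summable (fun j : ℕ =>
        ‖a (-((i:ℤ) + (r:ℤ) + 1))‖ * ‖b ((r:ℤ) + (j:ℤ) + 1)‖) :=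
      fun i => (hBr r).mul_left ‖a (-((i:ℤ) + (r:ℤ) + 1))‖
    have := Summable.tsum_prod' (hUslice r) hsl
    rw [this]
    simp only [hUdef, hAdef, hBdef]
    simp_rw [tsum_mul_left, tsum_mul_right]
  have hABsumm : Summable (fun r => A r * B r) :=
    Summable.of_nonneg_of_le (fun r => mul_nonneg (hA0 r) (hB0 r))
      (fun r => mul_le_mul_of_nonneg_left (hBle r) (hA0 r)) (hA.1.mul_right (Wnorm' b))
  have hU : Summable U := (summable_prod_of_nonneg hU0).mpr
    ⟨hUslice, by simp only [hUsliceSum]; exact hABsumm⟩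
  have hUsum : ∑' p, U p ≤ Wnorm' a * Wnorm' b := by
    rw [Summable.tsum_prod' hU hUslice]
    simp only [hUsliceSum]
    calc ∑' r : ℕ, A r * B r ≤ ∑' r : ℕ, A r * Wnorm' b :=
          Summable.tsum_le_tsum (fun r => mul_le_mul_of_nonneg_left (hBle r) (hA0 r))
            hABsumm (hA.1.mul_right (Wnorm' b))
      _ = (∑' r : ℕ, A r) * Wnorm' b := tsum_mul_right
      _ ≤ Wnorm' a * Wnorm' b :=
          mul_le_mul_of_nonneg_right hA.2 (Wnorm'_nonneg b)
  set V : (ℕ × ℕ) × ℕ → ℝ := fun q => U (q.2, q.1) with hVdef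
  have hV : Summable V := by
    have h2 := ((Equiv.prodComm (ℕ × ℕ) ℕ).summable_iff (f := U)).mpr hU
    exact h2.congr (fun p => rfl)
  have hViter := (summable_prod_of_nonneg (f := V) (fun q => hU0 _)).mp hV
  have hentry : ∀ p : ℕ × ℕ,
      ‖matMul (Hminus a) (Hplus b) p.1 p.2‖ ≤ ∑' r : ℕ, V (p, r) := by
    intro p
    have hs : Summable (fun r : ℕ => ‖Hminus a p.1 r * Hplus b r p.2‖) :=
      (hViter.1 p).congr (fun r => by
        simp only [hVdef, hUdef, Hminus, Hplus, norm_mul])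
    calc ‖matMul (Hminus a) (Hplus b) p.1 p.2‖
        ≤ ∑' r : ℕ, ‖Hminus a p.1 r * Hplus b r p.2‖ := norm_tsum_le_tsum_norm hs
      _ = ∑' r : ℕ, V (p, r) := tsum_congr fun r => by
          simp only [hVdef, hUdef, Hminus, Hplus, norm_mul]
  have hmem : MemF (matMul (Hminus a) (Hplus b)) :=
    Summable.of_nonneg_of_le (fun _ => norm_nonneg _) hentry hViter.2
  refine ⟨hmem, ?_⟩
  calc Fnorm (matMul (Hminus a) (Hplus b)) ≤ ∑' p : ℕ × ℕ, ∑' r : ℕ, V (p, r) :=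
        Summable.tsum_le_tsum hentry hmem hViter.2
    _ = ∑' q : (ℕ × ℕ) × ℕ, V q := (Summable.tsum_prod' hV hViter.1).symm
    _ = ∑' q : (ℕ × ℕ) × ℕ, U ((Equiv.prodComm (ℕ × ℕ) ℕ) q) :=
        tsum_congr (fun q => rfl)
    _ = ∑' p : ℕ × (ℕ × ℕ), U p := (Equiv.prodComm (ℕ × ℕ) ℕ).tsum_eq U
    _ ≤ Wnorm' a * Wnorm' b := hUsum

end Aux

theorem stmt8 (a : ℤ → ℂ) (ha : MemW a) (ha' : MemW' a) (k : ℕ) (hk : 1 ≤ k) :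
    MemF (matMul (Hminus a) (Hplus (powW a (k - 1)))) ∧
    Fnorm (matMul (Hminus a) (Hplus (powW a (k - 1)))) ≤
      ((k : ℝ) - 1) * Wnorm a ^ (k - 2) * Wnorm' a ^ 2 := by
  obtain ⟨h1, h2, h3, h4⟩ := pow_bounds ha ha' (k - 1)
  have hH := hankelF ha ha' h1 h3
  refine ⟨hH.1, ?_⟩
  have hWa' := Wnorm'_nonneg a
  have hcast : ((k - 1 : ℕ) : ℝ) = (k : ℝ) - 1 := by
    have : 1 ≤ k := hk
    push_cast [Nat.cast_sub this]
    ring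
  have hexp : (k - 1) - 1 = k - 2 := by omega
  calc Fnorm (matMul (Hminus a) (Hplus (powW a (k - 1))))
      ≤ Wnorm' a * Wnorm' (powW a (k - 1)) := hH.2
    _ ≤ Wnorm' a * (((k-1 : ℕ) : ℝ) * Wnorm a ^ ((k-1) - 1) * Wnorm' a) :=
        mul_le_mul_of_nonneg_left h4 hWa'
    _ = ((k : ℝ) - 1) * Wnorm a ^ (k - 2) * Wnorm' a ^ 2 := by
        rw [hexp, hcast]; ring
end
end

section
/- Let $a\in\mathcal W$ and $E_i=T(a)^i-T(a^i)$. Then for every $i\ge 1$ and every $1\le p\le\infty$, $\|E_i\|_p\le (i-1)\|a\|_{\mathcal W}^i$. -/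
set_option maxHeartbeats 1000000


open scoped BigOperators

noncomputable section

namespace Stmt10Aux

/-- Row and column bounds for a kernel. -/
structure KB (K : ℕ → ℕ → ℂ) (C : ℝ) : Prop where
  rowS : ∀ m, Summable fun n => ‖K m n‖
  colS : ∀ n, Summable fun m => ‖K m n‖
  rowB : ∀ m, ∑' n, ‖K m n‖ ≤ C
  colB : ∀ n, ∑' m, ‖K m n‖ ≤ C

lemma KB.nonneg {K : ℕ → ℕ → ℂ} {C : ℝ} (h : KB K C) : 0 ≤ C :=
  le_trans (tsum_nonneg fun _ => norm_nonneg _) (h.rowB 0)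

lemma KB.mono {K : ℕ → ℕ → ℂ} {C C' : ℝ} (h : KB K C) (hC : C ≤ C') : KB K C' :=
  ⟨h.rowS, h.colS, fun m => (h.rowB m).trans hC, fun n => (h.colB n).trans hC⟩

lemma wnorm_nonneg (a : ℤ → ℂ) : 0 ≤ Wnorm a := tsum_nonneg fun _ => norm_nonneg _

lemma norm_le_Wnorm {a : ℤ → ℂ} (ha : MemW a) (k : ℤ) : ‖a k‖ ≤ Wnorm a :=
  Summable.le_tsum ha k fun _ _ => norm_nonneg _

lemma inj_summable {a : ℤ → ℂ} (ha : MemW a) {ι : Type*} {e : ι → ℤ}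
    (he : Function.Injective e) : Summable fun n => ‖a (e n)‖ :=
  ha.comp_injective he

lemma inj_tsum_le {a : ℤ → ℂ} (ha : MemW a) {ι : Type*} {e : ι → ℤ}
    (he : Function.Injective e) : ∑' n, ‖a (e n)‖ ≤ Wnorm a :=
  Summable.tsum_le_tsum_of_inj e he (fun _ _ => norm_nonneg _) (fun _ => le_rfl)
    (ha.comp_injective he) ha

/-- The key double-sum estimate. -/
lemma doublesum {β γ : Type*} {x : γ → ℝ} {y : β → γ → ℝ} {Cx Cy : ℝ}
    (hx0 : ∀ r, 0 ≤ x r) (hy0 : ∀ n r, 0 ≤ y n r)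
    (hxS : Summable x) (hxB : ∑' r, x r ≤ Cx)
    (hyS : ∀ r, Summable fun n => y n r) (hyB : ∀ r, ∑' n, y n r ≤ Cy)
    (hCy : 0 ≤ Cy) :
    (∀ n, Summable fun r => x r * y n r) ∧
      (Summable fun n => ∑' r, x r * y n r) ∧
      ∑' n, ∑' r, x r * y n r ≤ Cx * Cy := by
  have h0 : ∀ q : γ × β, 0 ≤ x q.1 * y q.2 q.1 :=
    fun q => mul_nonneg (hx0 _) (hy0 _ _)
  have hprod : Summable (fun q : γ × β => x q.1 * y q.2 q.1) := by
    refine (summable_prod_of_nonneg h0).2 ⟨fun r => ?_, ?_⟩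
    · simpa using (hyS r).mul_left (x r)
    have he : ∀ r, ∑' n, x r * y n r = x r * ∑' n, y n r := fun r => tsum_mul_left
    simp only [he]
    refine Summable.of_nonneg_of_le
      (fun r => mul_nonneg (hx0 r) (tsum_nonneg fun n => hy0 n r))
      (fun r => mul_le_mul_of_nonneg_left (hyB r) (hx0 r)) (hxS.mul_right Cy)
  have hswap : Summable (fun q : β × γ => x q.2 * y q.1 q.2) := hprod.prod_symm
  have h0' : ∀ q : β × γ, 0 ≤ x q.2 * y q.1 q.2 := fun q => mul_nonneg (hx0 _) (hy0 _ _)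
  have hparts := (summable_prod_of_nonneg h0').1 hswap
  refine ⟨fun n => hparts.1 n, hparts.2, ?_⟩
  have hcomm : ∑' n, ∑' r, x r * y n r = ∑' r, ∑' n, x r * y n r := by
    exact Summable.tsum_comm' hprod (fun r => (hyS r).mul_left _) hparts.1
  rw [hcomm]
  have h1 : ∀ r, ∑' n, x r * y n r = x r * ∑' n, y n r := fun r => tsum_mul_left
  simp only [h1]
  calc ∑' r, x r * ∑' n, y n r ≤ ∑' r, x r * Cy := by
        refine Summable.tsum_le_tsum (fun r => mul_le_mul_of_nonneg_left (hyB r) (hx0 r)) ?_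
          (hxS.mul_right Cy)
        · have := (summable_prod_of_nonneg h0).1 hprod
          have h2 := this.2
          simpa only [h1] using h2
    _ = (∑' r, x r) * Cy := tsum_mul_right
    _ ≤ Cx * Cy := mul_le_mul_of_nonneg_right hxB hCy

/-- Row summability and bound from an entrywise double-sum bound. -/
lemma rows_of_bound {K : ℕ → ℕ → ℂ} {x y : ℕ → ℕ → ℝ} {Cx Cy : ℝ}
    (hx0 : ∀ m r, 0 ≤ x m r) (hy0 : ∀ n r, 0 ≤ y n r)
    (hxS : ∀ m, Summable (x m)) (hxB : ∀ m, ∑' r, x m r ≤ Cx)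
    (hyS : ∀ r, Summable fun n => y n r) (hyB : ∀ r, ∑' n, y n r ≤ Cy)
    (hCy : 0 ≤ Cy)
    (hK : ∀ m n, ‖K m n‖ ≤ ∑' r, x m r * y n r) :
    (∀ m, Summable fun n => ‖K m n‖) ∧ ∀ m, ∑' n, ‖K m n‖ ≤ Cx * Cy := by
  have hD : ∀ m, (∀ n, Summable fun r => x m r * y n r) ∧
      (Summable fun n => ∑' r, x m r * y n r) ∧
      ∑' n, ∑' r, x m r * y n r ≤ Cx * Cy :=
    fun m => doublesum (hx0 m) hy0 (hxS m) (hxB m) hyS hyB hCy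
  constructor
  · intro m
    exact Summable.of_nonneg_of_le (fun n => norm_nonneg _) (hK m) (hD m).2.1
  · intro m
    calc ∑' n, ‖K m n‖ ≤ ∑' n, ∑' r, x m r * y n r :=
          Summable.tsum_le_tsum (hK m)
            (Summable.of_nonneg_of_le (fun n => norm_nonneg _) (hK m) (hD m).2.1)
            (hD m).2.1
      _ ≤ Cx * Cy := (hD m).2.2




lemma toep_inj_row (m : ℕ) : Function.Injective (fun n : ℕ => (n : ℤ) - (m : ℤ)) := by
  intro p q h; simpa using h

lemma toep_inj_col (n : ℕ) : Function.Injective (fun m : ℕ => (n : ℤ) - (m : ℤ)) := by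
  intro p q h; simp only [sub_right_inj, Nat.cast_inj] at h; exact h

lemma KB_toep {a : ℤ → ℂ} (ha : MemW a) : KB (Toep a) (Wnorm a) where
  rowS m := inj_summable ha (toep_inj_row m)
  colS n := inj_summable ha (toep_inj_col n)
  rowB m := inj_tsum_le ha (toep_inj_row m)
  colB n := inj_tsum_le ha (toep_inj_col n)

lemma KB.sub {A B : ℕ → ℕ → ℂ} {C D : ℝ} (hA : KB A C) (hB : KB B D) :
    KB (A - B) (C + D) := by
  have hent : ∀ m n, ‖(A - B) m n‖ ≤ ‖A m n‖ + ‖B m n‖ := by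
    intro m n
    simpa [Pi.sub_apply] using norm_sub_le (A m n) (B m n)
  have hS : ∀ m, Summable fun n => ‖(A - B) m n‖ := fun m =>
    Summable.of_nonneg_of_le (fun n => norm_nonneg _) (hent m) ((hA.rowS m).add (hB.rowS m))
  have hS' : ∀ n, Summable fun m => ‖(A - B) m n‖ := fun n =>
    Summable.of_nonneg_of_le (fun m => norm_nonneg _) (fun m => hent m n)
      ((hA.colS n).add (hB.colS n))
  refine ⟨hS, hS', fun m => ?_, fun n => ?_⟩
  · calc ∑' n, ‖(A - B) m n‖ ≤ ∑' n, (‖A m n‖ + ‖B m n‖) :=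
          Summable.tsum_le_tsum (hent m) (hS m) ((hA.rowS m).add (hB.rowS m))
      _ = (∑' n, ‖A m n‖) + ∑' n, ‖B m n‖ := Summable.tsum_add (hA.rowS m) (hB.rowS m)
      _ ≤ C + D := add_le_add (hA.rowB m) (hB.rowB m)
  · calc ∑' m, ‖(A - B) m n‖ ≤ ∑' m, (‖A m n‖ + ‖B m n‖) :=
          Summable.tsum_le_tsum (fun m => hent m n) (hS' n) ((hA.colS n).add (hB.colS n))
      _ = (∑' m, ‖A m n‖) + ∑' m, ‖B m n‖ := Summable.tsum_add (hA.colS n) (hB.colS n)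
      _ ≤ C + D := add_le_add (hA.colB n) (hB.colB n)

lemma KB.mul {A B : ℕ → ℕ → ℂ} {C D : ℝ} (hA : KB A C) (hB : KB B D) :
    KB (matMul A B) (C * D) := by
  have hentS : ∀ m n, Summable fun r => ‖A m r‖ * ‖B r n‖ := by
    intro m n
    refine Summable.of_nonneg_of_le (fun r => mul_nonneg (norm_nonneg _) (norm_nonneg _))
      (fun r => ?_) ((hA.rowS m).mul_right D)
    exact mul_le_mul_of_nonneg_left ((Summable.le_tsum (hB.rowS r) n fun _ _ => norm_nonneg _).trans
      (hB.rowB r)) (norm_nonneg _)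
  have hent : ∀ m n, ‖matMul A B m n‖ ≤ ∑' r, ‖A m r‖ * ‖B r n‖ := by
    intro m n
    have h1 : Summable fun r => ‖A m r * B r n‖ := by
      simpa only [norm_mul] using hentS m n
    calc ‖matMul A B m n‖ ≤ ∑' r, ‖A m r * B r n‖ := norm_tsum_le_tsum_norm h1
      _ = ∑' r, ‖A m r‖ * ‖B r n‖ := tsum_congr fun r => norm_mul _ _
  have hrows := rows_of_bound (K := matMul A B)
    (x := fun m r => ‖A m r‖) (y := fun n r => ‖B r n‖)
    (fun _ _ => norm_nonneg _) (fun _ _ => norm_nonneg _)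
    hA.rowS hA.rowB hB.rowS hB.rowB (hB.nonneg) hent
  have hcols := rows_of_bound (K := fun n m => matMul A B m n)
    (x := fun n r => ‖B r n‖) (y := fun m r => ‖A m r‖)
    (fun _ _ => norm_nonneg _) (fun _ _ => norm_nonneg _)
    hB.colS hB.colB hA.colS hA.colB (hA.nonneg)
    (fun n m => (hent m n).trans (le_of_eq (tsum_congr fun r => mul_comm _ _)))
  refine ⟨hrows.1, hcols.1, fun m => (hrows.2 m).trans le_rfl, fun n => ?_⟩
  exact (hcols.2 n).trans (le_of_eq (mul_comm _ _))

lemma matMul_idMat (A : ℕ → ℕ → ℂ) : matMul A idMat = A := by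
  funext m n
  show (∑' r : ℕ, A m r * idMat r n) = A m n
  rw [tsum_eq_single n]
  · simp [idMat]
  · intro r hr
    simp [idMat, hr]

lemma matPow_one (A : ℕ → ℕ → ℂ) : matPow A 1 = A := by
  show matMul A (matPow A 0) = A
  exact matMul_idMat A

lemma KB_matPow {A : ℕ → ℕ → ℂ} {C : ℝ} (hA : KB A C) :
    ∀ i, 1 ≤ i → KB (matPow A i) (C ^ i) := by
  intro i hi
  induction i, hi using Nat.le_induction with
  | base => rw [matPow_one, pow_one]; exact hA
  | succ n hn ih =>
    have := hA.mul ih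
    rw [pow_succ']
    exact this


lemma conv_norm_summand_summable {a b : ℤ → ℂ} (ha : MemW a) (hb : MemW b) (k : ℤ) :
    Summable fun j : ℤ => ‖a j * b (k - j)‖ := by
  refine Summable.of_nonneg_of_le (fun j => norm_nonneg _) (fun j => ?_)
    (ha.mul_right (Wnorm b))
  rw [norm_mul]
  exact mul_le_mul_of_nonneg_left (norm_le_Wnorm hb _) (norm_nonneg _)

lemma conv_data {a b : ℤ → ℂ} (ha : MemW a) (hb : MemW b) :
    (∀ k, ‖convW a b k‖ ≤ ∑' j, ‖a j‖ * ‖b (k - j)‖) ∧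
    (Summable fun k : ℤ => ∑' j, ‖a j‖ * ‖b (k - j)‖) ∧
    ∑' k : ℤ, ∑' j, ‖a j‖ * ‖b (k - j)‖ ≤ Wnorm a * Wnorm b := by
  have hD := doublesum (x := fun j : ℤ => ‖a j‖) (y := fun k j : ℤ => ‖b (k - j)‖)
    (Cx := Wnorm a) (Cy := Wnorm b)
    (fun _ => norm_nonneg _) (fun _ _ => norm_nonneg _) ha le_rfl
    (fun j => inj_summable hb (Equiv.subRight j).injective)
    (fun j => le_of_eq ((Equiv.subRight j).tsum_eq (fun k => ‖b k‖)))
    (wnorm_nonneg b)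
  refine ⟨fun k => ?_, hD.2.1, hD.2.2⟩
  calc ‖convW a b k‖ ≤ ∑' j, ‖a j * b (k - j)‖ :=
        norm_tsum_le_tsum_norm (conv_norm_summand_summable ha hb k)
    _ = ∑' j, ‖a j‖ * ‖b (k - j)‖ := tsum_congr fun j => norm_mul _ _

lemma memW_convW {a b : ℤ → ℂ} (ha : MemW a) (hb : MemW b) :
    MemW (convW a b) ∧ Wnorm (convW a b) ≤ Wnorm a * Wnorm b := by
  obtain ⟨hent, hS, hB⟩ := conv_data ha hb
  have hmem : MemW (convW a b) :=
    Summable.of_nonneg_of_le (fun k => norm_nonneg _) hent hS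
  exact ⟨hmem, le_trans (Summable.tsum_le_tsum hent hmem hS) hB⟩

lemma powW_one (a : ℤ → ℂ) : powW a 1 = a := by
  funext k
  show (∑' j : ℤ, a j * (if k - j = 0 then 1 else 0)) = a k
  rw [tsum_eq_single k]
  · simp
  · intro j hj
    have : k - j ≠ 0 := sub_ne_zero.2 (Ne.symm hj)
    simp [this]

lemma powW_mem {a : ℤ → ℂ} (ha : MemW a) :
    ∀ i, 1 ≤ i → MemW (powW a i) ∧ Wnorm (powW a i) ≤ Wnorm a ^ i := by
  intro i hi
  induction i, hi using Nat.le_induction with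
  | base => rw [powW_one, pow_one]; exact ⟨ha, le_rfl⟩
  | succ n hn ih =>
    have h := memW_convW ha ih.1
    refine ⟨h.1, h.2.trans ?_⟩
    rw [pow_succ']
    exact mul_le_mul_of_nonneg_left ih.2 (wnorm_nonneg a)

lemma hankel_entry {a b : ℤ → ℂ} (ha : MemW a) (hb : MemW b) (m n : ℕ) :
    ‖(matMul (Toep a) (Toep b) - Toep (convW a b)) m n‖
      ≤ ∑' r : ℕ, ‖a (-((r:ℤ) + 1) - m)‖ * ‖b ((n:ℤ) + ((r:ℤ) + 1))‖ := by
  set g : ℤ → ℂ := fun r => a (r - m) * b ((n:ℤ) - r) with hgdef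
  have hgS : Summable fun r : ℤ => ‖g r‖ := by
    have h1 := conv_norm_summand_summable ha hb ((n:ℤ) - m)
    have h2 := h1.comp_injective (Equiv.subRight (m:ℤ)).injective
    refine h2.congr fun r => ?_
    simp only [Function.comp, Equiv.subRight_apply, hgdef]
    congr 2
    ring
  have hgsum : Summable g := hgS.of_norm
  have hnat : Summable fun r : ℕ => g r := hgsum.comp_injective Nat.cast_injective
  have hneginj : Function.Injective fun r : ℕ => -((r:ℤ) + 1) := by
    intro p q h; simpa using h
  have hneg : Summable fun r : ℕ => g (-((r:ℤ) + 1)) := hgsum.comp_injective hneginj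
  have hsplit : HasSum g ((∑' r : ℕ, g r) + ∑' r : ℕ, g (-((r:ℤ) + 1))) := by
    have := HasSum.of_nat_of_neg_add_one hnat.hasSum hneg.hasSum
    simpa using this
  have htot : ∑' r : ℤ, g r = (∑' r : ℕ, g r) + ∑' r : ℕ, g (-((r:ℤ) + 1)) :=
    hgsum.hasSum.unique hsplit
  have e1 : matMul (Toep a) (Toep b) m n = ∑' r : ℕ, g r := rfl
  have e2 : Toep (convW a b) m n = ∑' r : ℤ, g r := by
    show convW a b ((n:ℤ) - m) = _
    rw [show (∑' r : ℤ, g r) = ∑' r : ℤ, a (r - m) * b (((n:ℤ) - m) - (r - m)) from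
      tsum_congr fun r => by rw [show ((n:ℤ) - m) - (r - m) = (n:ℤ) - r by ring]]
    exact ((Equiv.subRight (m:ℤ)).tsum_eq fun j => a j * b (((n:ℤ) - m) - j)).symm
  have e3 : (matMul (Toep a) (Toep b) - Toep (convW a b)) m n
      = -(∑' r : ℕ, g (-((r:ℤ) + 1))) := by
    simp only [Pi.sub_apply, e1, e2, htot]
    ring
  rw [e3, norm_neg]
  have hnegnorm : Summable fun r : ℕ => ‖g (-((r:ℤ) + 1))‖ := hgS.comp_injective hneginj
  calc ‖∑' r : ℕ, g (-((r:ℤ) + 1))‖ ≤ ∑' r : ℕ, ‖g (-((r:ℤ) + 1))‖ :=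
        norm_tsum_le_tsum_norm hnegnorm
    _ = ∑' r : ℕ, ‖a (-((r:ℤ) + 1) - m)‖ * ‖b ((n:ℤ) + ((r:ℤ) + 1))‖ := by
        refine tsum_congr fun r => ?_
        rw [hgdef]
        simp only []
        rw [norm_mul, show (n:ℤ) - -((r:ℤ) + 1) = (n:ℤ) + ((r:ℤ) + 1) by ring]

lemma KB_hankel {a b : ℤ → ℂ} (ha : MemW a) (hb : MemW b) :
    KB (matMul (Toep a) (Toep b) - Toep (convW a b)) (Wnorm a * Wnorm b) := by
  have hxinj : ∀ m : ℕ, Function.Injective fun r : ℕ => -((r:ℤ) + 1) - (m:ℤ) := by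
    intro m p q h; simpa using h
  have hyinj : ∀ r : ℕ, Function.Injective fun n : ℕ => (n:ℤ) + ((r:ℤ) + 1) := by
    intro r p q h; simpa using h
  have hxinj' : ∀ r : ℕ, Function.Injective fun m : ℕ => -((r:ℤ) + 1) - (m:ℤ) := by
    intro r p q h; simp only [sub_right_inj, Nat.cast_inj] at h; exact h
  have hyinj' : ∀ n : ℕ, Function.Injective fun r : ℕ => (n:ℤ) + ((r:ℤ) + 1) := by
    intro n p q h; simpa using h
  have hrows := rows_of_bound (K := matMul (Toep a) (Toep b) - Toep (convW a b))
    (x := fun m r => ‖a (-((r:ℤ) + 1) - m)‖) (y := fun n r => ‖b ((n:ℤ) + ((r:ℤ) + 1))‖)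
    (Cx := Wnorm a) (Cy := Wnorm b)
    (fun _ _ => norm_nonneg _) (fun _ _ => norm_nonneg _)
    (fun m => inj_summable ha (hxinj m)) (fun m => inj_tsum_le ha (hxinj m))
    (fun r => inj_summable hb (hyinj r)) (fun r => inj_tsum_le hb (hyinj r))
    (wnorm_nonneg b) (hankel_entry ha hb)
  have hcols := rows_of_bound
    (K := fun n m => (matMul (Toep a) (Toep b) - Toep (convW a b)) m n)
    (x := fun n r => ‖b ((n:ℤ) + ((r:ℤ) + 1))‖) (y := fun m r => ‖a (-((r:ℤ) + 1) - m)‖)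
    (Cx := Wnorm b) (Cy := Wnorm a)
    (fun _ _ => norm_nonneg _) (fun _ _ => norm_nonneg _)
    (fun n => inj_summable hb (hyinj' n)) (fun n => inj_tsum_le hb (hyinj' n))
    (fun r => inj_summable ha (hxinj' r)) (fun r => inj_tsum_le ha (hxinj' r))
    (wnorm_nonneg a)
    (fun n m => (hankel_entry ha hb m n).trans
      (le_of_eq (tsum_congr fun r => mul_comm _ _)))
  exact ⟨hrows.1, hcols.1, hrows.2,
    fun n => (hcols.2 n).trans (le_of_eq (mul_comm _ _))⟩

lemma KB_zero : KB (fun _ _ => (0:ℂ)) 0 := by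
  refine ⟨fun m => ?_, fun n => ?_, fun m => ?_, fun n => ?_⟩ <;> simp [summable_zero]

lemma KB_E {a : ℤ → ℂ} (ha : MemW a) (i : ℕ) (hi : 1 ≤ i) :
    KB (matPow (Toep a) i - Toep (powW a i)) (((i:ℝ) - 1) * Wnorm a ^ i) := by
  match i, hi with
  | 1, _ =>
    have hE : matPow (Toep a) 1 - Toep (powW a 1) = fun _ _ => (0:ℂ) := by
      rw [matPow_one, powW_one]
      funext m n
      simp
    rw [hE]
    refine KB_zero.mono ?_
    simp
  | 2, _ =>
    have hE : matPow (Toep a) 2 - Toep (powW a 2)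
        = matMul (Toep a) (Toep a) - Toep (convW a a) := by
      have h1 : matPow (Toep a) 2 = matMul (Toep a) (Toep a) := by
        show matMul (Toep a) (matPow (Toep a) 1) = _
        rw [matPow_one]
      have h2 : powW a 2 = convW a a := by
        show convW a (powW a 1) = _
        rw [powW_one]
      rw [h1, h2]
    rw [hE]
    refine (KB_hankel ha ha).mono (le_of_eq ?_)
    push_cast
    ring
  | (k+3), _ =>
    set i := k + 3 with hidef
    have h1 : KB (matPow (Toep a) i) (Wnorm a ^ i) :=
      KB_matPow (KB_toep ha) i (by omega)
    have hp := powW_mem ha i (by omega)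
    have h2 : KB (Toep (powW a i)) (Wnorm a ^ i) := (KB_toep hp.1).mono hp.2
    refine (h1.sub h2).mono ?_
    have hW : 0 ≤ Wnorm a ^ i := pow_nonneg (wnorm_nonneg a) i
    have : (2:ℝ) ≤ (i:ℝ) - 1 := by
      rw [hidef]; push_cast; linarith
    nlinarith

lemma schur (p : ENNReal) [Fact (1 ≤ p)] {K : ℕ → ℕ → ℂ} {C : ℝ}
    (hK : KB K C) (v : lp (fun _ : ℕ => ℂ) p) :
    ∃ hw : (fun m : ℕ => ∑' n : ℕ, K m n * (v : ℕ → ℂ) n) ∈ lp (fun _ : ℕ => ℂ) p,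
      ‖(⟨_, hw⟩ : lp (fun _ : ℕ => ℂ) p)‖ ≤ C * ‖v‖ := by
  set w : ℕ → ℂ := fun m => ∑' n : ℕ, K m n * (v : ℕ → ℂ) n with hwdef
  have hp0 : p ≠ 0 := (lt_of_lt_of_le zero_lt_one Fact.out).ne'
  have hC : 0 ≤ C := hK.nonneg
  have hv : ∀ n, ‖(v : ℕ → ℂ) n‖ ≤ ‖v‖ := fun n => lp.norm_apply_le_norm hp0 v n
  have hvnn : 0 ≤ ‖v‖ := norm_nonneg v
  have hKv : ∀ m, Summable fun n => ‖K m n * (v : ℕ → ℂ) n‖ := by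
    intro m
    refine Summable.of_nonneg_of_le (fun n => norm_nonneg _) (fun n => ?_)
      ((hK.rowS m).mul_right ‖v‖)
    rw [norm_mul]
    exact mul_le_mul_of_nonneg_left (hv n) (norm_nonneg _)
  have hS1 : ∀ m, Summable fun n => ‖K m n‖ * ‖(v : ℕ → ℂ) n‖ := by
    intro m
    have := hKv m
    simpa only [norm_mul] using this
  have hb1 : ∀ m, ‖w m‖ ≤ ∑' n, ‖K m n‖ * ‖(v : ℕ → ℂ) n‖ := by
    intro m
    calc ‖w m‖ ≤ ∑' n, ‖K m n * (v : ℕ → ℂ) n‖ := norm_tsum_le_tsum_norm (hKv m)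
      _ = ∑' n, ‖K m n‖ * ‖(v : ℕ → ℂ) n‖ := tsum_congr fun n => norm_mul _ _
  have hlinf : ∀ m, ‖w m‖ ≤ C * ‖v‖ := by
    intro m
    refine (hb1 m).trans ?_
    calc ∑' n, ‖K m n‖ * ‖(v : ℕ → ℂ) n‖ ≤ ∑' n, ‖K m n‖ * ‖v‖ :=
          Summable.tsum_le_tsum (fun n => mul_le_mul_of_nonneg_left (hv n) (norm_nonneg _))
            (hS1 m) ((hK.rowS m).mul_right ‖v‖)
      _ = (∑' n, ‖K m n‖) * ‖v‖ := tsum_mul_right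
      _ ≤ C * ‖v‖ := mul_le_mul_of_nonneg_right (hK.rowB m) hvnn
  by_cases hp : p = ⊤
  · subst hp
    have hmem : Memℓp w ⊤ := memℓp_infty ⟨C * ‖v‖, by rintro x ⟨m, rfl⟩; exact hlinf m⟩
    refine ⟨hmem, ?_⟩
    rw [lp.norm_eq_ciSup]
    exact ciSup_le fun m => hlinf m
  · -- finite p
    have ht : 1 ≤ p.toReal := by
      rw [← ENNReal.toReal_one]
      exact ENNReal.toReal_mono hp Fact.out
    set t : ℝ := p.toReal with htdef
    have ht0 : 0 < t := lt_of_lt_of_le zero_lt_one ht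
    have hvS : Summable fun n => ‖(v : ℕ → ℂ) n‖ ^ t := (memℓp_gen_iff ht0).1 (lp.memℓp v)
    have hvpow : ∑' n, ‖(v : ℕ → ℂ) n‖ ^ t = ‖v‖ ^ t := (lp.norm_rpow_eq_tsum ht0 v).symm
    -- double sum over columns
    have hD := doublesum (β := ℕ) (γ := ℕ)
      (x := fun n => ‖(v : ℕ → ℂ) n‖ ^ t) (y := fun m n => ‖K m n‖)
      (Cx := ‖v‖ ^ t) (Cy := C)
      (fun n => Real.rpow_nonneg (norm_nonneg _) t) (fun _ _ => norm_nonneg _)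
      hvS (le_of_eq hvpow) hK.colS hK.colB hC
    set S : ℕ → ℝ := fun m => ∑' n, ‖K m n‖ * ‖(v : ℕ → ℂ) n‖ ^ t with hSdef
    have hSeq : ∀ m, (∑' n, ‖(v : ℕ → ℂ) n‖ ^ t * ‖K m n‖) = S m :=
      fun m => tsum_congr fun n => mul_comm _ _
    have hSsummable : Summable S := by
      have := hD.2.1
      simpa only [hSeq] using this
    have hStot : ∑' m, S m ≤ ‖v‖ ^ t * C := by
      have := hD.2.2
      simpa only [hSeq] using this
    have hSm : ∀ m, Summable fun n => ‖K m n‖ * ‖(v : ℕ → ℂ) n‖ ^ t := by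
      intro m
      have := hD.1 m
      refine this.congr fun n => mul_comm _ _
    have hSnn : ∀ m, 0 ≤ S m := fun m => tsum_nonneg fun n =>
      mul_nonneg (norm_nonneg _) (Real.rpow_nonneg (norm_nonneg _) t)
    -- pointwise Hölder estimate
    have hpoint : ∀ m, ‖w m‖ ^ t ≤ C ^ (t - 1) * S m := by
      intro m
      have hR : ∑' n, ‖K m n‖ * ‖(v : ℕ → ℂ) n‖ ≤ C ^ (1 - t⁻¹) * S m ^ t⁻¹ := by
        refine Summable.tsum_le_of_sum_le (hS1 m) fun s => ?_
        calc ∑ n ∈ s, ‖K m n‖ * ‖(v : ℕ → ℂ) n‖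
            ≤ (∑ n ∈ s, ‖K m n‖) ^ (1 - t⁻¹)
              * (∑ n ∈ s, ‖K m n‖ * ‖(v : ℕ → ℂ) n‖ ^ t) ^ t⁻¹ :=
              Real.inner_le_weight_mul_Lp_of_nonneg s ht _ _
                (fun n => norm_nonneg _) (fun n => norm_nonneg _)
          _ ≤ C ^ (1 - t⁻¹) * S m ^ t⁻¹ := by
              have h1 : (∑ n ∈ s, ‖K m n‖) ≤ C :=
                (Summable.sum_le_tsum s (fun n _ => norm_nonneg _) (hK.rowS m)).trans (hK.rowB m)
              have h2 : (∑ n ∈ s, ‖K m n‖ * ‖(v : ℕ → ℂ) n‖ ^ t) ≤ S m :=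
                Summable.sum_le_tsum s (fun n _ => mul_nonneg (norm_nonneg _)
                  (Real.rpow_nonneg (norm_nonneg _) t)) (hSm m)
              have e1 : (0:ℝ) ≤ 1 - t⁻¹ := by
                have : t⁻¹ ≤ 1 := by
                  rw [inv_le_one_iff₀]; right; exact ht
                linarith
              have e2 : (0:ℝ) ≤ t⁻¹ := inv_nonneg.2 ht0.le
              refine mul_le_mul (Real.rpow_le_rpow (Finset.sum_nonneg fun n _ =>
                norm_nonneg _) h1 e1) (Real.rpow_le_rpow (Finset.sum_nonneg fun n _ =>
                mul_nonneg (norm_nonneg _) (Real.rpow_nonneg (norm_nonneg _) t)) h2 e2)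
                (Real.rpow_nonneg (Finset.sum_nonneg fun n _ => mul_nonneg (norm_nonneg _)
                  (Real.rpow_nonneg (norm_nonneg _) t)) _) (Real.rpow_nonneg hC _)
      have hwR : ‖w m‖ ≤ C ^ (1 - t⁻¹) * S m ^ t⁻¹ := (hb1 m).trans hR
      calc ‖w m‖ ^ t ≤ (C ^ (1 - t⁻¹) * S m ^ t⁻¹) ^ t :=
            Real.rpow_le_rpow (norm_nonneg _) hwR ht0.le
        _ = C ^ (t - 1) * S m := by
            rw [Real.mul_rpow (Real.rpow_nonneg hC _) (Real.rpow_nonneg (hSnn m) _),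
              ← Real.rpow_mul hC, ← Real.rpow_mul (hSnn m)]
            rw [show (1 - t⁻¹) * t = t - 1 by field_simp,
              show t⁻¹ * t = 1 by field_simp, Real.rpow_one]
    have hwt : Summable fun m => ‖w m‖ ^ t := by
      refine Summable.of_nonneg_of_le (fun m => Real.rpow_nonneg (norm_nonneg _) t)
        hpoint (hSsummable.mul_left _)
    have hmem : Memℓp w p := memℓp_gen hwt
    refine ⟨hmem, ?_⟩
    have hT : ∑' m, ‖w m‖ ^ t ≤ (C * ‖v‖) ^ t := by
      calc ∑' m, ‖w m‖ ^ t ≤ ∑' m, C ^ (t - 1) * S m :=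
            Summable.tsum_le_tsum hpoint hwt (hSsummable.mul_left _)
        _ = C ^ (t - 1) * ∑' m, S m := tsum_mul_left
        _ ≤ C ^ (t - 1) * (‖v‖ ^ t * C) := by
            refine mul_le_mul_of_nonneg_left hStot (Real.rpow_nonneg hC _)
        _ = (C * ‖v‖) ^ t := by
            rw [Real.mul_rpow hC hvnn]
            rw [show C ^ (t - 1) * (‖v‖ ^ t * C) = (C ^ (t - 1) * C ^ (1:ℝ)) * ‖v‖ ^ t by
              rw [Real.rpow_one]; ring]
            rw [← Real.rpow_add' hC (by simp [ht0.ne'] : t - 1 + 1 ≠ 0)]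
            norm_num
    rw [lp.norm_eq_tsum_rpow ht0]
    have : (∑' m, ‖(⟨w, hmem⟩ : lp (fun _ : ℕ => ℂ) p) m‖ ^ t) = ∑' m, ‖w m‖ ^ t := rfl
    calc (∑' m, ‖(⟨w, hmem⟩ : lp (fun _ : ℕ => ℂ) p) m‖ ^ p.toReal) ^ (1 / p.toReal)
        ≤ ((C * ‖v‖) ^ t) ^ (1 / t) := by
          refine Real.rpow_le_rpow (tsum_nonneg fun m => Real.rpow_nonneg (norm_nonneg _) _)
            hT (by positivity)
      _ = C * ‖v‖ := by
          rw [← Real.rpow_mul (mul_nonneg hC hvnn), mul_one_div, div_self ht0.ne',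
            Real.rpow_one]
end Stmt10Aux

/-- `‖E_i‖_p ≤ (i-1) ‖a‖_W^i` where `E_i = T(a)^i - T(a^i)`, as an operator on `ℓ^p`. -/
theorem stmt10 (p : ENNReal) [Fact (1 ≤ p)] (a : ℤ → ℂ) (ha : MemW a)
    (i : ℕ) (hi : 1 ≤ i) (v : lp (fun _ : ℕ => ℂ) p) :
    ∃ hw : (fun i' : ℕ =>
        ∑' j : ℕ, (matPow (Toep a) i - Toep (powW a i)) i' j * (v : ℕ → ℂ) j) ∈
        lp (fun _ : ℕ => ℂ) p,
      ‖(⟨_, hw⟩ : lp (fun _ : ℕ => ℂ) p)‖ ≤ ((i : ℝ) - 1) * Wnorm a ^ i * ‖v‖ := by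
  obtain ⟨hw, hb⟩ := Stmt10Aux.schur p (Stmt10Aux.KB_E ha i hi) v
  exact ⟨hw, hb⟩
end
end

section
/- Let $a\in\mathcal W$ with $a'\in\mathcal W$, and $E_i=T(a)^i-T(a^i)$. Then for every $i\ge 0$, $\|E_i\|_{\mathcal F}\le \frac{i(i-1)}2 \|a'\|_{\mathcal W}^2\|a\|_{\mathcal W}^{i-2}$ (for $i\ge 2$; and $E_0=E_1=0$). In particular each $E_i\in\mathcal F$. -/
open scoped BigOperators

noncomputable section

/-! ### Auxiliary ℝ≥0∞-valued machinery -/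

open scoped ENNReal NNReal

namespace Stmt11Aux

def eC (z : ℂ) : ℝ≥0∞ := ‖z‖₊
def mZ (k : ℤ) : ℝ≥0∞ := ENNReal.ofReal |(k : ℝ)|
def Wnorm1 (a : ℤ → ℂ) : ℝ≥0∞ := ∑' k : ℤ, eC (a k)
def Wnorm1' (a : ℤ → ℂ) : ℝ≥0∞ := ∑' k : ℤ, mZ k * eC (a k)
def FnormE (S : ℕ → ℕ → ℂ) : ℝ≥0∞ := ∑' p : ℕ × ℕ, eC (S p.1 p.2)

lemma e_mul (x y : ℂ) : eC (x * y) = eC x * eC y := by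
  simp [eC, nnnorm_mul]

lemma e_tsum_le {ι : Type*} (f : ι → ℂ) : eC (∑' i, f i) ≤ ∑' i, eC (f i) := by
  by_cases hs : Summable fun i => ‖f i‖₊
  · rw [show (∑' i, eC (f i)) = ((∑' i, ‖f i‖₊ : ℝ≥0) : ℝ≥0∞) from (ENNReal.coe_tsum hs).symm]
    simp only [eC]
    exact_mod_cast nnnorm_tsum_le hs
  · have : (∑' i, eC (f i)) = ⊤ := by
      simpa [eC] using (not_iff_not.mpr ENNReal.tsum_coe_ne_top_iff_summable).mpr hs
    simp [this]

lemma summable_of_fin {ι : Type*} {f : ι → ℂ} (h : (∑' i, eC (f i)) ≠ ⊤) : Summable f :=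
  Summable.of_nnnorm (ENNReal.tsum_coe_ne_top_iff_summable.mp h)

lemma summable_norm_of_fin {ι : Type*} {f : ι → ℂ} (h : (∑' i, eC (f i)) ≠ ⊤) :
    Summable fun i => ‖f i‖ := by
  have := ENNReal.tsum_coe_ne_top_iff_summable.mp (h : (∑' i, ((‖f i‖₊ : ℝ≥0) : ℝ≥0∞)) ≠ ⊤)
  simpa [← NNReal.summable_coe] using this

lemma e_sub_le (x y : ℂ) : eC (x - y) ≤ eC x + eC y := by
  have : ‖x - y‖₊ ≤ ‖x‖₊ + ‖y‖₊ := nnnorm_sub_le x y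
  simp only [eC]
  exact_mod_cast this

lemma m_triangle (j k : ℤ) : mZ k ≤ mZ j + mZ (k - j) := by
  rw [mZ, mZ, mZ, ← ENNReal.ofReal_add (abs_nonneg _) (abs_nonneg _)]
  apply ENNReal.ofReal_le_ofReal
  push_cast
  calc |(k : ℝ)| = |(j : ℝ) + ((k : ℝ) - j)| := by ring_nf
    _ ≤ |(j : ℝ)| + |(k : ℝ) - j| := abs_add_le _ _

lemma tsum_e_shift (a : ℤ → ℂ) (c : ℤ) : ∑' r : ℤ, eC (a (r - c)) = Wnorm1 a :=
  (Equiv.subRight c).tsum_eq fun k => eC (a k)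

lemma tsum_me_shift (a : ℤ → ℂ) (c : ℤ) : ∑' r : ℤ, mZ (r - c) * eC (a (r - c)) = Wnorm1' a :=
  (Equiv.subRight c).tsum_eq fun k => mZ k * eC (a k)

lemma tsum_e_comp_le (a : ℤ → ℂ) {φ : ℕ → ℤ} (hφ : Function.Injective φ) :
    ∑' n : ℕ, eC (a (φ n)) ≤ Wnorm1 a :=
  ENNReal.tsum_comp_le_tsum_of_injective hφ fun k => eC (a k)

lemma tsum_me_comp_le (a : ℤ → ℂ) {φ : ℕ → ℤ} (hφ : Function.Injective φ) :
    ∑' n : ℕ, mZ (φ n) * eC (a (φ n)) ≤ Wnorm1' a :=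
  ENNReal.tsum_comp_le_tsum_of_injective hφ fun k => mZ k * eC (a k)

lemma e_le_wE (a : ℤ → ℂ) (k : ℤ) : eC (a k) ≤ Wnorm1 a := ENNReal.le_tsum k

lemma e_le_fE (S : ℕ → ℕ → ℂ) (i j : ℕ) : eC (S i j) ≤ FnormE S :=
  ENNReal.le_tsum (⟨i, j⟩ : ℕ × ℕ)

lemma conv_entry_le (a b : ℤ → ℂ) (k : ℤ) :
    eC (convW a b k) ≤ ∑' j : ℤ, eC (a j) * eC (b (k - j)) := by
  refine (e_tsum_le _).trans ?_
  exact le_of_eq (tsum_congr fun j => e_mul _ _)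

lemma wE_conv (a b : ℤ → ℂ) : Wnorm1 (convW a b) ≤ Wnorm1 a * Wnorm1 b := by
  calc Wnorm1 (convW a b) ≤ ∑' k : ℤ, ∑' j : ℤ, eC (a j) * eC (b (k - j)) :=
        ENNReal.tsum_le_tsum fun k => conv_entry_le a b k
    _ = ∑' j : ℤ, ∑' k : ℤ, eC (a j) * eC (b (k - j)) := ENNReal.tsum_comm
    _ = ∑' j : ℤ, eC (a j) * ∑' k : ℤ, eC (b (k - j)) := by
        exact tsum_congr fun j => ENNReal.tsum_mul_left
    _ = ∑' j : ℤ, eC (a j) * Wnorm1 b := by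
        exact tsum_congr fun j => by rw [tsum_e_shift]
    _ = Wnorm1 a * Wnorm1 b := ENNReal.tsum_mul_right

lemma w'E_conv (a b : ℤ → ℂ) :
    Wnorm1' (convW a b) ≤ Wnorm1' a * Wnorm1 b + Wnorm1 a * Wnorm1' b := by
  have step1 : Wnorm1' (convW a b) ≤
      ∑' k : ℤ, ∑' j : ℤ, (mZ j * eC (a j) * eC (b (k - j)) +
        eC (a j) * (mZ (k - j) * eC (b (k - j)))) := by
    refine ENNReal.tsum_le_tsum fun k => ?_
    calc mZ k * eC (convW a b k) ≤ mZ k * ∑' j : ℤ, eC (a j) * eC (b (k - j)) := by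
          exact mul_le_mul_right (conv_entry_le a b k) _
      _ = ∑' j : ℤ, mZ k * (eC (a j) * eC (b (k - j))) := ENNReal.tsum_mul_left.symm
      _ ≤ _ := by
          refine ENNReal.tsum_le_tsum fun j => ?_
          calc mZ k * (eC (a j) * eC (b (k - j)))
              ≤ (mZ j + mZ (k - j)) * (eC (a j) * eC (b (k - j))) :=
                mul_le_mul_left (m_triangle j k) _
            _ = mZ j * eC (a j) * eC (b (k - j)) + eC (a j) * (mZ (k - j) * eC (b (k - j))) := by
                ring
  have step2 : (∑' k : ℤ, ∑' j : ℤ, mZ j * eC (a j) * eC (b (k - j))) =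
      Wnorm1' a * Wnorm1 b := by
    rw [ENNReal.tsum_comm]
    calc (∑' j : ℤ, ∑' k : ℤ, mZ j * eC (a j) * eC (b (k - j)))
        = ∑' j : ℤ, (mZ j * eC (a j)) * ∑' k : ℤ, eC (b (k - j)) :=
          tsum_congr fun j => ENNReal.tsum_mul_left
      _ = ∑' j : ℤ, (mZ j * eC (a j)) * Wnorm1 b := tsum_congr fun j => by rw [tsum_e_shift]
      _ = Wnorm1' a * Wnorm1 b := ENNReal.tsum_mul_right
  have step3 : (∑' k : ℤ, ∑' j : ℤ, eC (a j) * (mZ (k - j) * eC (b (k - j)))) =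
      Wnorm1 a * Wnorm1' b := by
    rw [ENNReal.tsum_comm]
    calc (∑' j : ℤ, ∑' k : ℤ, eC (a j) * (mZ (k - j) * eC (b (k - j))))
        = ∑' j : ℤ, eC (a j) * ∑' k : ℤ, mZ (k - j) * eC (b (k - j)) :=
          tsum_congr fun j => ENNReal.tsum_mul_left
      _ = ∑' j : ℤ, eC (a j) * Wnorm1' b := tsum_congr fun j => by rw [tsum_me_shift]
      _ = Wnorm1 a * Wnorm1' b := ENNReal.tsum_mul_right
  calc Wnorm1' (convW a b) ≤ _ := step1
    _ = (∑' k : ℤ, ∑' j : ℤ, mZ j * eC (a j) * eC (b (k - j))) +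
        ∑' k : ℤ, ∑' j : ℤ, eC (a j) * (mZ (k - j) * eC (b (k - j))) := by
        rw [← ENNReal.tsum_add]
        exact tsum_congr fun k => ENNReal.tsum_add
    _ = _ := by rw [step2, step3]

lemma wE_delta (a : ℤ → ℂ) : Wnorm1 (powW a 0) = 1 := by
  rw [Wnorm1, tsum_eq_single (0 : ℤ)]
  · simp [powW, eC]
  · intro k hk; simp [powW, hk, eC]

lemma w'E_delta (a : ℤ → ℂ) : Wnorm1' (powW a 0) = 0 := by
  rw [Wnorm1']
  convert tsum_zero with k
  rcases eq_or_ne k 0 with rfl | hk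
  · simp [mZ]
  · simp [powW, hk, eC]

lemma wE_pow (a : ℤ → ℂ) (n : ℕ) : Wnorm1 (powW a n) ≤ Wnorm1 a ^ n := by
  induction n with
  | zero => simp [wE_delta]
  | succ n ih =>
      calc Wnorm1 (powW a (n + 1)) ≤ Wnorm1 a * Wnorm1 (powW a n) := wE_conv _ _
        _ ≤ Wnorm1 a * Wnorm1 a ^ n := mul_le_mul_right ih _
        _ = Wnorm1 a ^ (n + 1) := (pow_succ' _ _).symm

lemma w'E_pow (a : ℤ → ℂ) (n : ℕ) :
    Wnorm1' (powW a n) ≤ (n : ℝ≥0∞) * Wnorm1' a * Wnorm1 a ^ (n - 1) := by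
  induction n with
  | zero => simp [w'E_delta]
  | succ n ih =>
      calc Wnorm1' (powW a (n + 1))
          ≤ Wnorm1' a * Wnorm1 (powW a n) + Wnorm1 a * Wnorm1' (powW a n) := w'E_conv _ _
        _ ≤ Wnorm1' a * Wnorm1 a ^ n +
            Wnorm1 a * ((n : ℝ≥0∞) * Wnorm1' a * Wnorm1 a ^ (n - 1)) := by
            exact add_le_add (mul_le_mul_right (wE_pow a n) _) (mul_le_mul_right ih _)
        _ ≤ ((n : ℕ) + 1 : ℝ≥0∞) * Wnorm1' a * Wnorm1 a ^ n := by
            rcases n with _ | p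
            · simp
            · have : Wnorm1 a * ((((p:ℕ)+1 : ℕ) : ℝ≥0∞) * Wnorm1' a * Wnorm1 a ^ (p + 1 - 1)) =
                  (((p:ℕ)+1 : ℕ) : ℝ≥0∞) * Wnorm1' a * Wnorm1 a ^ (p + 1) := by
                simp only [Nat.add_sub_cancel]
                ring
              rw [this]
              push_cast
              ring_nf
              exact le_refl _
        _ = ((n + 1 : ℕ) : ℝ≥0∞) * Wnorm1' a * Wnorm1 a ^ (n + 1 - 1) := by
            push_cast; simp

lemma matMul_entry_le (A B : ℕ → ℕ → ℂ) (i j : ℕ) :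
    eC (matMul A B i j) ≤ ∑' r : ℕ, eC (A i r) * eC (B r j) :=
  (e_tsum_le _).trans (le_of_eq (tsum_congr fun r => e_mul _ _))

lemma fE_toepMul (a : ℤ → ℂ) (B : ℕ → ℕ → ℂ) :
    FnormE (matMul (Toep a) B) ≤ Wnorm1 a * FnormE B := by
  calc FnormE (matMul (Toep a) B)
      ≤ ∑' p : ℕ × ℕ, ∑' r : ℕ, eC (Toep a p.1 r) * eC (B r p.2) :=
        ENNReal.tsum_le_tsum fun p => matMul_entry_le _ _ _ _
    _ = ∑' i : ℕ, ∑' j : ℕ, ∑' r : ℕ, eC (Toep a i r) * eC (B r j) :=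
        ENNReal.tsum_prod (f := fun i j => ∑' r : ℕ, eC (Toep a i r) * eC (B r j))
    _ = ∑' i : ℕ, ∑' r : ℕ, ∑' j : ℕ, eC (Toep a i r) * eC (B r j) :=
        tsum_congr fun i => ENNReal.tsum_comm
    _ = ∑' r : ℕ, ∑' i : ℕ, ∑' j : ℕ, eC (Toep a i r) * eC (B r j) := ENNReal.tsum_comm
    _ = ∑' r : ℕ, (∑' i : ℕ, eC (Toep a i r)) * ∑' j : ℕ, eC (B r j) := by
        refine tsum_congr fun r => ?_
        rw [← ENNReal.tsum_mul_right]
        exact tsum_congr fun i => ENNReal.tsum_mul_left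
    _ ≤ ∑' r : ℕ, Wnorm1 a * ∑' j : ℕ, eC (B r j) := by
        refine ENNReal.tsum_le_tsum fun r => ?_
        refine mul_le_mul_left ?_ _
        exact tsum_e_comp_le a (φ := fun i : ℕ => (r : ℤ) - i)
          (sub_right_injective.comp Nat.cast_injective)
    _ = Wnorm1 a * ∑' r : ℕ, ∑' j : ℕ, eC (B r j) := ENNReal.tsum_mul_left
    _ = Wnorm1 a * FnormE B := by
        rw [FnormE, ENNReal.tsum_prod (f := fun r j => eC (B r j))]

lemma count_le (a : ℤ → ℂ) :
    (∑' p : ℕ × ℕ, eC (a (-((p.1 : ℤ) + (p.2 : ℤ) + 1)))) ≤ Wnorm1' a := by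
  have h1 : (∑' p : ℕ × ℕ, eC (a (-((p.1 : ℤ) + (p.2 : ℤ) + 1)))) =
      ∑' x : Σ n : ℕ, Finset.HasAntidiagonal.antidiagonal n, eC (a (-((x.1 : ℤ) + 1))) := by
    rw [← Finset.HasAntidiagonal.sigmaAntidiagonalEquivProd.tsum_eq
      (fun p : ℕ × ℕ => eC (a (-((p.1 : ℤ) + (p.2 : ℤ) + 1))))]
    refine tsum_congr fun x => ?_
    obtain ⟨n, ⟨⟨k, l⟩, hkl⟩⟩ := x
    rw [Finset.HasAntidiagonal.mem_antidiagonal] at hkl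
    simp only [Finset.HasAntidiagonal.sigmaAntidiagonalEquivProd_apply]
    have hx : -(((k, l).1 : ℤ) + ((k, l).2 : ℤ) + 1) = -((n : ℤ) + 1) := by
      simp only at hkl ⊢; omega
    rw [hx]
  rw [h1, ENNReal.tsum_sigma (fun (n : ℕ) (_ : Finset.HasAntidiagonal.antidiagonal n) => eC (a (-((n : ℤ) + 1))))]
  have h2 : ∀ n : ℕ, (∑' _ : Finset.HasAntidiagonal.antidiagonal n, eC (a (-((n : ℤ) + 1)))) =
      ((n : ℝ≥0∞) + 1) * eC (a (-((n : ℤ) + 1))) := by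
    intro n
    rw [tsum_fintype]
    simp [Finset.sum_const, Finset.card_univ, Finset.Nat.card_antidiagonal, nsmul_eq_mul]
  calc (∑' n : ℕ, ∑' _ : Finset.HasAntidiagonal.antidiagonal n, eC (a (-((n : ℤ) + 1))))
      = ∑' n : ℕ, ((n : ℝ≥0∞) + 1) * eC (a (-((n : ℤ) + 1))) := tsum_congr h2
    _ = ∑' n : ℕ, mZ (-((n : ℤ) + 1)) * eC (a (-((n : ℤ) + 1))) := by
        refine tsum_congr fun n => ?_
        congr 1
        have h3 : |((-((n : ℤ) + 1) : ℤ) : ℝ)| = ((n + 1 : ℕ) : ℝ) := by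
          push_cast
          rw [abs_neg, abs_of_nonneg (by positivity)]
        rw [mZ, h3, ENNReal.ofReal_natCast]
        push_cast
        ring
    _ ≤ Wnorm1' a := tsum_me_comp_le a (φ := fun n : ℕ => -((n : ℤ) + 1))
        (neg_injective.comp ((add_left_injective (1 : ℤ)).comp Nat.cast_injective))

lemma tsum_e_plus_le (b : ℤ → ℂ) (s : ℕ) :
    ∑' j : ℕ, eC (b ((s : ℤ) + (j : ℤ) + 1)) ≤ Wnorm1' b := by
  refine le_trans ?_ (tsum_me_comp_le b (φ := fun j : ℕ => (s : ℤ) + (j : ℤ) + 1)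
    ((add_left_injective (1 : ℤ)).comp ((add_right_injective (s : ℤ)).comp Nat.cast_injective)))
  refine ENNReal.tsum_le_tsum fun j => ?_
  refine le_mul_of_one_le_left (by positivity) ?_
  rw [mZ, ENNReal.one_le_ofReal]
  have h : (((s : ℤ) + (j : ℤ) + 1 : ℤ) : ℝ) = (s : ℝ) + (j : ℝ) + 1 := by push_cast; ring
  rw [h, abs_of_nonneg (by positivity)]
  have : (0 : ℝ) ≤ (s : ℝ) + (j : ℝ) := by positivity
  linarith

lemma fE_hankel (a b : ℤ → ℂ) :
    FnormE (matMul (Hminus a) (Hplus b)) ≤ Wnorm1' a * Wnorm1' b := by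
  calc FnormE (matMul (Hminus a) (Hplus b))
      ≤ ∑' p : ℕ × ℕ, ∑' s : ℕ, eC (Hminus a p.1 s) * eC (Hplus b s p.2) :=
        ENNReal.tsum_le_tsum fun p => matMul_entry_le _ _ _ _
    _ = ∑' i : ℕ, ∑' j : ℕ, ∑' s : ℕ, eC (Hminus a i s) * eC (Hplus b s j) :=
        ENNReal.tsum_prod (f := fun i j => ∑' s : ℕ, eC (Hminus a i s) * eC (Hplus b s j))
    _ = ∑' i : ℕ, ∑' s : ℕ, ∑' j : ℕ, eC (Hminus a i s) * eC (Hplus b s j) :=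
        tsum_congr fun i => ENNReal.tsum_comm
    _ = ∑' i : ℕ, ∑' s : ℕ, eC (Hminus a i s) * ∑' j : ℕ, eC (Hplus b s j) :=
        tsum_congr fun i => tsum_congr fun s => ENNReal.tsum_mul_left
    _ ≤ ∑' i : ℕ, ∑' s : ℕ, eC (Hminus a i s) * Wnorm1' b := by
        refine ENNReal.tsum_le_tsum fun i => ENNReal.tsum_le_tsum fun s => ?_
        exact mul_le_mul_right (tsum_e_plus_le b s) _
    _ = (∑' i : ℕ, ∑' s : ℕ, eC (Hminus a i s)) * Wnorm1' b := by
        rw [← ENNReal.tsum_mul_right]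
        exact tsum_congr fun i => ENNReal.tsum_mul_right
    _ = (∑' p : ℕ × ℕ, eC (Hminus a p.1 p.2)) * Wnorm1' b := by
        rw [ENNReal.tsum_prod (f := fun i s => eC (Hminus a i s))]
    _ ≤ Wnorm1' a * Wnorm1' b := mul_le_mul_left (count_le a) _

lemma negSucc_inj' : Function.Injective (fun n : ℕ => -((n : ℤ) + 1)) :=
  neg_injective.comp ((add_left_injective (1 : ℤ)).comp Nat.cast_injective)

lemma toep_mul_eq (a b : ℤ → ℂ) (ha : Wnorm1 a ≠ ⊤) (hb : Wnorm1 b ≠ ⊤) (i j : ℕ) :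
    Toep (convW a b) i j =
      matMul (Toep a) (Toep b) i j + matMul (Hminus a) (Hplus b) i j := by
  set F : ℤ → ℂ := fun r => a (r - (i : ℤ)) * b ((j : ℤ) - r) with hF
  have hsum : (∑' r : ℤ, eC (F r)) ≠ ⊤ := by
    refine ne_top_of_le_ne_top (ENNReal.mul_ne_top ha hb) ?_
    calc (∑' r : ℤ, eC (F r)) ≤ ∑' r : ℤ, eC (a (r - (i : ℤ))) * Wnorm1 b := by
          refine ENNReal.tsum_le_tsum fun r => ?_
          rw [hF, e_mul]
          exact mul_le_mul_right (e_le_wE b _) _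
      _ = (∑' r : ℤ, eC (a (r - (i : ℤ)))) * Wnorm1 b := ENNReal.tsum_mul_right
      _ = Wnorm1 a * Wnorm1 b := by rw [tsum_e_shift]
  have hFsum : Summable F := summable_of_fin hsum
  have h1 : Summable fun n : ℕ => F n := hFsum.comp_injective Nat.cast_injective
  have h2 : Summable fun n : ℕ => F (-((n : ℤ) + 1)) := hFsum.comp_injective negSucc_inj'
  have hsplit : ∑' r : ℤ, F r = (∑' n : ℕ, F n) + ∑' n : ℕ, F (-((n : ℤ) + 1)) :=
    tsum_of_nat_of_neg_add_one h1 h2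
  have hL : Toep (convW a b) i j = ∑' r : ℤ, F r := by
    show (∑' k : ℤ, a k * b ((j : ℤ) - (i : ℤ) - k)) = ∑' r : ℤ, F r
    rw [← (Equiv.subRight (i : ℤ)).tsum_eq (fun k : ℤ => a k * b ((j : ℤ) - (i : ℤ) - k))]
    refine tsum_congr fun r => ?_
    show a (r - (i : ℤ)) * b ((j : ℤ) - (i : ℤ) - (r - (i : ℤ))) = F r
    rw [hF]
    congr 1
    ring_nf
  have hR1 : matMul (Toep a) (Toep b) i j = ∑' n : ℕ, F n := rfl
  have hR2 : matMul (Hminus a) (Hplus b) i j = ∑' n : ℕ, F (-((n : ℤ) + 1)) := by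
    refine tsum_congr fun n => ?_
    show a (-((i : ℤ) + (n : ℤ) + 1)) * b ((n : ℤ) + (j : ℤ) + 1) = F (-((n : ℤ) + 1))
    rw [hF]
    congr 1
    · congr 1; ring
    · congr 1; ring
  rw [hL, hsplit, hR1, hR2]

lemma inj_cast_sub (c : ℤ) : Function.Injective (fun r : ℕ => (r : ℤ) - c) :=
  fun x y h => by simp only [sub_left_inj] at h; exact_mod_cast h

lemma D0_eq (a : ℤ → ℂ) : matPow (Toep a) 0 - Toep (powW a 0) = 0 := by
  funext i j
  have hiff : ((j : ℤ) - (i : ℤ) = 0) ↔ (i = j) := by omega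
  simp [matPow, idMat, Toep, powW, hiff, Pi.sub_apply]

lemma D1_eq (a : ℤ → ℂ) : matPow (Toep a) 1 - Toep (powW a 1) = 0 := by
  funext i j
  have h1 : matPow (Toep a) 1 i j = a ((j : ℤ) - (i : ℤ)) := by
    show (∑' r : ℕ, Toep a i r * idMat r j) = _
    rw [tsum_eq_single j]
    · simp [Toep, idMat]
    · intro r hr; simp [idMat, hr]
  have h2 : Toep (powW a 1) i j = a ((j : ℤ) - (i : ℤ)) := by
    show (∑' k : ℤ, a k * powW a 0 ((j : ℤ) - (i : ℤ) - k)) = _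
    rw [tsum_eq_single ((j : ℤ) - (i : ℤ))]
    · simp [powW]
    · intro k hk
      have : (j : ℤ) - (i : ℤ) - k ≠ 0 := fun h => hk (by omega)
      simp [powW, this]
  simp [Pi.sub_apply, h1, h2]

lemma recur (a : ℤ → ℂ) (ha : Wnorm1 a ≠ ⊤) (n : ℕ)
    (hfin : FnormE (matPow (Toep a) n - Toep (powW a n)) ≠ ⊤)
    (hpow : Wnorm1 (powW a n) ≠ ⊤) (i j : ℕ) :
    (matPow (Toep a) (n + 1) - Toep (powW a (n + 1))) i j =
      matMul (Toep a) (matPow (Toep a) n - Toep (powW a n)) i j -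
        matMul (Hminus a) (Hplus (powW a n)) i j := by
  set D : ℕ → ℕ → ℂ := matPow (Toep a) n - Toep (powW a n) with hD
  have hS1 : Summable fun r : ℕ => Toep a i r * Toep (powW a n) r j := by
    refine summable_of_fin (ne_top_of_le_ne_top (ENNReal.mul_ne_top ha hpow) ?_)
    calc (∑' r : ℕ, eC (Toep a i r * Toep (powW a n) r j))
        ≤ ∑' r : ℕ, eC (Toep a i r) * Wnorm1 (powW a n) := by
          refine ENNReal.tsum_le_tsum fun r => ?_
          rw [e_mul]
          exact mul_le_mul_right (e_le_wE _ _) _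
      _ = (∑' r : ℕ, eC (Toep a i r)) * Wnorm1 (powW a n) := ENNReal.tsum_mul_right
      _ ≤ Wnorm1 a * Wnorm1 (powW a n) :=
          mul_le_mul_left (tsum_e_comp_le a (inj_cast_sub (i : ℤ))) _
  have hS2 : Summable fun r : ℕ => Toep a i r * D r j := by
    refine summable_of_fin (ne_top_of_le_ne_top (ENNReal.mul_ne_top ha hfin) ?_)
    calc (∑' r : ℕ, eC (Toep a i r * D r j))
        ≤ ∑' r : ℕ, eC (Toep a i r) * FnormE D := by
          refine ENNReal.tsum_le_tsum fun r => ?_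
          rw [e_mul]
          exact mul_le_mul_right (e_le_fE D r j) _
      _ = (∑' r : ℕ, eC (Toep a i r)) * FnormE D := ENNReal.tsum_mul_right
      _ ≤ Wnorm1 a * FnormE D :=
          mul_le_mul_left (tsum_e_comp_le a (inj_cast_sub (i : ℤ))) _
  have hpowsplit : matPow (Toep a) (n + 1) i j =
      matMul (Toep a) (Toep (powW a n)) i j + matMul (Toep a) D i j := by
    show (∑' r : ℕ, Toep a i r * matPow (Toep a) n r j) = _
    have hterm : ∀ r : ℕ, Toep a i r * matPow (Toep a) n r j =
        Toep a i r * Toep (powW a n) r j + Toep a i r * D r j := by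
      intro r
      have hDr : D r j = matPow (Toep a) n r j - Toep (powW a n) r j := rfl
      rw [hDr]; ring
    rw [tsum_congr hterm, hS1.tsum_add hS2]
    rfl
  have htm : Toep (powW a (n + 1)) i j =
      matMul (Toep a) (Toep (powW a n)) i j + matMul (Hminus a) (Hplus (powW a n)) i j :=
    toep_mul_eq a (powW a n) ha hpow i j
  have happ : (matPow (Toep a) (n + 1) - Toep (powW a (n + 1))) i j =
      matPow (Toep a) (n + 1) i j - Toep (powW a (n + 1)) i j := rfl
  rw [happ, hpowsplit, htm]
  ring

lemma bound_main (a : ℤ → ℂ) (ha : Wnorm1 a ≠ ⊤) (ha' : Wnorm1' a ≠ ⊤) (n : ℕ) :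
    FnormE (matPow (Toep a) n - Toep (powW a n)) ≤
      (n.choose 2 : ℝ≥0∞) * Wnorm1' a ^ 2 * Wnorm1 a ^ (n - 2) := by
  induction n with
  | zero =>
      rw [D0_eq a]
      simp [FnormE, eC]
  | succ n ih =>
      have hRfin : ((n.choose 2 : ℝ≥0∞) * Wnorm1' a ^ 2 * Wnorm1 a ^ (n - 2)) ≠ ⊤ :=
        ENNReal.mul_ne_top (ENNReal.mul_ne_top (ENNReal.natCast_ne_top _)
          (ENNReal.pow_ne_top ha')) (ENNReal.pow_ne_top ha)
      have hfin : FnormE (matPow (Toep a) n - Toep (powW a n)) ≠ ⊤ :=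
        ne_top_of_le_ne_top hRfin ih
      have hpow : Wnorm1 (powW a n) ≠ ⊤ :=
        ne_top_of_le_ne_top (ENNReal.pow_ne_top ha) (wE_pow a n)
      have hstep : FnormE (matPow (Toep a) (n + 1) - Toep (powW a (n + 1))) ≤
          Wnorm1 a * FnormE (matPow (Toep a) n - Toep (powW a n)) +
            Wnorm1' a * Wnorm1' (powW a n) := by
        calc FnormE (matPow (Toep a) (n + 1) - Toep (powW a (n + 1)))
            = ∑' p : ℕ × ℕ, eC (matMul (Toep a) (matPow (Toep a) n - Toep (powW a n)) p.1 p.2 -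
                matMul (Hminus a) (Hplus (powW a n)) p.1 p.2) := by
              refine tsum_congr fun p => ?_
              rw [recur a ha n hfin hpow p.1 p.2]
          _ ≤ ∑' p : ℕ × ℕ,
                (eC (matMul (Toep a) (matPow (Toep a) n - Toep (powW a n)) p.1 p.2) +
                  eC (matMul (Hminus a) (Hplus (powW a n)) p.1 p.2)) :=
              ENNReal.tsum_le_tsum fun p => e_sub_le _ _
          _ = FnormE (matMul (Toep a) (matPow (Toep a) n - Toep (powW a n))) +
                FnormE (matMul (Hminus a) (Hplus (powW a n))) := ENNReal.tsum_add
          _ ≤ Wnorm1 a * FnormE (matPow (Toep a) n - Toep (powW a n)) +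
                Wnorm1' a * Wnorm1' (powW a n) :=
              add_le_add (fE_toepMul _ _) (fE_hankel _ _)
      refine hstep.trans ?_
      have h2 : Wnorm1' a * Wnorm1' (powW a n) ≤
          Wnorm1' a * ((n : ℝ≥0∞) * Wnorm1' a * Wnorm1 a ^ (n - 1)) :=
        mul_le_mul_right (w'E_pow a n) _
      refine (add_le_add (mul_le_mul_right ih _) h2).trans ?_
      rcases n with _ | _ | p
      · simp
      · norm_num
        rw [sq]
      · have hc : (((p + 3).choose 2 : ℕ) : ℝ≥0∞) =
            (((p + 2).choose 2 : ℕ) : ℝ≥0∞) + ((p : ℝ≥0∞) + 2) := by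
          rw [Nat.choose_succ_succ (p + 2) 1, Nat.choose_one_right]
          push_cast
          ring
        have hs1 : p + 2 - 2 = p := by omega
        have hs2 : p + 2 - 1 = p + 1 := by omega
        have hs3 : p + 3 - 2 = p + 1 := by omega
        rw [hs1, hs2, hs3, hc]
        refine le_of_eq ?_
        push_cast
        ring

lemma memW_fin {a : ℤ → ℂ} (ha : MemW a) : Wnorm1 a ≠ ⊤ := by
  refine ENNReal.tsum_coe_ne_top_iff_summable.mpr ?_
  rw [← NNReal.summable_coe]
  simpa [coe_nnnorm, MemW] using ha

lemma memW'_fin {a : ℤ → ℂ} (ha' : MemW' a) : Wnorm1' a ≠ ⊤ := by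
  have heq : Wnorm1' a = ∑' k : ℤ, ENNReal.ofReal (|(k : ℝ)| * ‖a k‖) := by
    refine tsum_congr fun k => ?_
    rw [ENNReal.ofReal_mul (abs_nonneg _), ofReal_norm_eq_enorm]
    rfl
  rw [heq, ← ENNReal.ofReal_tsum_of_nonneg (fun k => by positivity) ha']
  exact ENNReal.ofReal_ne_top

lemma wnorm_eq (a : ℤ → ℂ) : Wnorm a = (Wnorm1 a).toReal := by
  rw [Wnorm1]
  simp only [eC]
  rw [ENNReal.tsum_toReal_eq fun k => ENNReal.coe_ne_top]
  exact tsum_congr fun k => by simp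

lemma wnorm'_eq (a : ℤ → ℂ) : Wnorm' a = (Wnorm1' a).toReal := by
  rw [Wnorm1']
  simp only [eC, mZ]
  rw [ENNReal.tsum_toReal_eq
    (fun k => ENNReal.mul_ne_top ENNReal.ofReal_ne_top ENNReal.coe_ne_top)]
  refine tsum_congr fun k => ?_
  rw [ENNReal.toReal_mul, ENNReal.toReal_ofReal (abs_nonneg _)]
  simp

lemma fnorm_eq (S : ℕ → ℕ → ℂ) : Fnorm S = (FnormE S).toReal := by
  rw [FnormE]
  simp only [eC]
  rw [ENNReal.tsum_toReal_eq fun p => ENNReal.coe_ne_top]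
  exact tsum_congr fun p => by simp

lemma memF_of_fin {S : ℕ → ℕ → ℂ} (h : FnormE S ≠ ⊤) : MemF S :=
  summable_norm_of_fin (f := fun p : ℕ × ℕ => S p.1 p.2) h

end Stmt11Aux

open Stmt11Aux in
/-- `E_0 = E_1 = 0` and `‖E_i‖_ℱ ≤ i(i-1)/2 ‖a'‖_W² ‖a‖_W^{i-2}` for `i ≥ 2`;
in particular each `E_i ∈ ℱ`. -/
theorem stmt11 (a : ℤ → ℂ) (ha : MemW a) (ha' : MemW' a) :
    matPow (Toep a) 0 - Toep (powW a 0) = 0 ∧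
    matPow (Toep a) 1 - Toep (powW a 1) = 0 ∧
    ∀ i : ℕ, 2 ≤ i →
      MemF (matPow (Toep a) i - Toep (powW a i)) ∧
      Fnorm (matPow (Toep a) i - Toep (powW a i)) ≤
        (i : ℝ) * ((i : ℝ) - 1) / 2 * Wnorm' a ^ 2 * Wnorm a ^ (i - 2) := by
  have hwa : Wnorm1 a ≠ ⊤ := memW_fin ha
  have hwa' : Wnorm1' a ≠ ⊤ := memW'_fin ha'
  refine ⟨D0_eq a, D1_eq a, fun i hi => ?_⟩
  have hb := bound_main a hwa hwa' i
  have hRfin : ((i.choose 2 : ℝ≥0∞) * Wnorm1' a ^ 2 * Wnorm1 a ^ (i - 2)) ≠ ⊤ :=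
    ENNReal.mul_ne_top (ENNReal.mul_ne_top (ENNReal.natCast_ne_top _)
      (ENNReal.pow_ne_top hwa')) (ENNReal.pow_ne_top hwa)
  have hfin : FnormE (matPow (Toep a) i - Toep (powW a i)) ≠ ⊤ :=
    ne_top_of_le_ne_top hRfin hb
  refine ⟨memF_of_fin hfin, ?_⟩
  rw [fnorm_eq]
  refine le_trans (ENNReal.toReal_mono hRfin hb) ?_
  rw [ENNReal.toReal_mul, ENNReal.toReal_mul, ENNReal.toReal_pow, ENNReal.toReal_pow,
    ENNReal.toReal_natCast, ← wnorm_eq, ← wnorm'_eq]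
  rw [Nat.cast_choose_two]
end
end

section
/- Let $a\in\mathcal W$ with $a'\in\mathcal W$. Then $\exp(T(a))=T(\exp(a))+F$ for some matrix $F$ with $\|F\|_{\mathcal F}<\infty$; i.e., the exponential of a semi-infinite Toeplitz matrix with symbol in $\{a: a,a'\in\mathcal W\}$ is again a quasi-Toeplitz matrix, with Toeplitz part given by the symbol $\exp(a)$. -/
open scoped BigOperators NNReal ENNReal

noncomputable section

def en (z : ℂ) : ℝ≥0∞ := (‖z‖₊ : ℝ≥0∞)

lemma en_mul (x y : ℂ) : en (x * y) = en x * en y := by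
  simp [en, nnnorm_mul, ENNReal.coe_mul]

lemma summable_norm_iff_en {ι : Type*} (f : ι → ℂ) :
    Summable (fun x => ‖f x‖) ↔ (∑' x, en (f x)) ≠ ⊤ := by
  simp only [en]
  rw [ENNReal.tsum_coe_ne_top_iff_summable, ← NNReal.summable_coe]
  simp [coe_nnnorm]

lemma en_tsum_le {ι : Type*} (f : ι → ℂ) : en (∑' x, f x) ≤ ∑' x, en (f x) := by
  by_cases h : (∑' x, en (f x)) = ⊤
  · simp [h]
  · have hs : Summable fun x => ‖f x‖₊ := by
      simpa only [en] using ENNReal.tsum_coe_ne_top_iff_summable.1 h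
    calc en (∑' x, f x) ≤ ((∑' x, ‖f x‖₊ : ℝ≥0) : ℝ≥0∞) :=
          ENNReal.coe_le_coe.2 (nnnorm_tsum_le hs)
      _ = ∑' x, en (f x) := ENNReal.coe_tsum hs

lemma en_fact_mul (m : ℕ) (z : ℂ) :
    en ((m.factorial : ℂ)⁻¹ * z) = ((m.factorial : ℝ≥0∞))⁻¹ * en z := by
  rw [en_mul]
  congr 1
  have h1 : ‖((m.factorial : ℕ) : ℂ)‖₊ = (m.factorial : ℝ≥0) := RCLike.nnnorm_natCast _
  simp only [en, nnnorm_inv, h1]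
  rw [ENNReal.coe_inv (by exact_mod_cast m.factorial_ne_zero)]
  norm_cast

def WW (a : ℤ → ℂ) : ℝ≥0∞ := ∑' k : ℤ, en (a k)
def WW' (a : ℤ → ℂ) : ℝ≥0∞ := ∑' k : ℤ, ((k.natAbs : ℝ≥0∞)) * en (a k)

lemma WW_ne_top {a : ℤ → ℂ} (ha : MemW a) : WW a ≠ ⊤ :=
  (summable_norm_iff_en a).1 ha

lemma WW'_ne_top {a : ℤ → ℂ} (ha' : MemW' a) : WW' a ≠ ⊤ := by
  have h : WW' a = ∑' k : ℤ, ((k.natAbs * ‖a k‖₊ : ℝ≥0) : ℝ≥0∞) := by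
    refine tsum_congr fun k => ?_
    simp [en, ENNReal.coe_mul]
  rw [h, ENNReal.tsum_coe_ne_top_iff_summable, ← NNReal.summable_coe]
  have : ∀ k : ℤ, ((k.natAbs * ‖a k‖₊ : ℝ≥0) : ℝ) = |(k : ℝ)| * ‖a k‖ := by
    intro k
    push_cast
    rw [Nat.cast_natAbs, Int.cast_abs]
  simpa only [this, MemW'] using ha'

lemma norm_le_tsum {b : ℤ → ℂ} (hb : Summable fun k => ‖b k‖) (t : ℤ) :
    ‖b t‖ ≤ ∑' k, ‖b k‖ := Summable.le_tsum hb t fun _ _ => norm_nonneg _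

lemma summable_shift {a : ℤ → ℂ} (ha : MemW a) (i : ℤ) :
    Summable fun r : ℤ => ‖a (r - i)‖ :=
  ((Equiv.subRight i).summable_iff (f := fun k => ‖a k‖)).2 ha

lemma summable_toep_row {a b : ℤ → ℂ} (ha : MemW a) (hb : Summable fun k => ‖b k‖)
    (i j : ℕ) : Summable fun r : ℕ => a ((r : ℤ) - i) * b ((j : ℤ) - r) := by
  apply Summable.of_norm
  have h1 : Summable fun r : ℕ => ‖a ((r : ℤ) - i)‖ :=
    (summable_shift ha i).comp_injective (fun x y h => by exact_mod_cast h)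
  refine Summable.of_nonneg_of_le (fun r => norm_nonneg _) (fun r => ?_)
    (h1.mul_right (∑' k, ‖b k‖))
  rw [norm_mul]
  exact mul_le_mul_of_nonneg_left (norm_le_tsum hb _) (norm_nonneg _)

lemma toepMul {a b : ℤ → ℂ} (ha : MemW a) (hb : Summable fun k => ‖b k‖) (i j : ℕ) :
    matMul (Toep a) (Toep b) i j
      = convW a b ((j : ℤ) - i) - matMul (Hminus a) (Hplus b) i j := by
  set f : ℤ → ℂ := fun r => a (r - i) * b ((j : ℤ) - r) with hf
  have h1 : Summable fun n : ℕ => f n := summable_toep_row ha hb i j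
  have h2 : Summable fun n : ℕ => f (-((n : ℤ) + 1)) := by
    apply Summable.of_norm
    have hs : Summable fun n : ℕ => ‖a (-((n : ℤ) + 1) - i)‖ :=
      (summable_shift ha i).comp_injective (fun x y h => by
        simp only [neg_add_rev] at h; omega)
    refine Summable.of_nonneg_of_le (fun r => norm_nonneg _) (fun n => ?_)
      (hs.mul_right (∑' k, ‖b k‖))
    rw [hf, norm_mul]
    exact mul_le_mul_of_nonneg_left (norm_le_tsum hb _) (norm_nonneg _)
  have hsplit := tsum_of_nat_of_neg_add_one h1 h2
  have hconv : convW a b ((j : ℤ) - i) = ∑' r : ℤ, f r := by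
    rw [convW, ← (Equiv.subRight (i : ℤ)).tsum_eq
      (f := fun t => a t * b ((j : ℤ) - (i : ℤ) - t))]
    exact tsum_congr fun r => by
      rw [hf]
      simp only [Equiv.subRight_apply]
      rw [show (j : ℤ) - i - (r - i) = (j : ℤ) - r by ring]
  have hS1 : ∑' n : ℕ, f n = matMul (Toep a) (Toep b) i j := rfl
  have hS2 : ∑' n : ℕ, f (-((n : ℤ) + 1)) = matMul (Hminus a) (Hplus b) i j := by
    refine tsum_congr fun n => ?_
    rw [hf]
    show a (-((n : ℤ) + 1) - i) * b ((j : ℤ) - (-((n : ℤ) + 1)))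
        = a (-((i : ℤ) + n + 1)) * b ((n : ℤ) + j + 1)
    rw [show -((n : ℤ) + 1) - i = -((i : ℤ) + n + 1) by ring,
      show (j : ℤ) - (-((n : ℤ) + 1)) = (n : ℤ) + j + 1 by ring]
  rw [hS1, hS2] at hsplit
  rw [hconv, hsplit]
  ring

lemma pow_bound {a : ℤ → ℂ} (ha : MemW a) :
    ∀ m, (Summable fun k : ℤ => ‖powW a m k‖) ∧ (∑' k : ℤ, en (powW a m k)) ≤ (WW a) ^ m := by
  intro m
  induction m with
  | zero =>
      have h : (∑' k : ℤ, en (powW a 0 k)) = 1 := by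
        rw [tsum_eq_single (0 : ℤ) (fun k hk => by simp [powW, en, hk])]
        simp [powW, en]
      constructor
      · rw [summable_norm_iff_en, h]; exact ENNReal.one_ne_top
      · rw [h, pow_zero]
  | succ m ih =>
      obtain ⟨hbs, hble⟩ := ih
      have key : (∑' k : ℤ, en (powW a (m + 1) k)) ≤ WW a * (WW a) ^ m := by
        have step1 : ∀ k : ℤ, en (powW a (m + 1) k)
            ≤ ∑' t : ℤ, en (a t) * en (powW a m (k - t)) := by
          intro k
          show en (convW a (powW a m) k) ≤ _
          calc en (convW a (powW a m) k) ≤ ∑' t : ℤ, en (a t * powW a m (k - t)) :=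
                en_tsum_le _
            _ = _ := tsum_congr fun t => en_mul _ _
        calc (∑' k : ℤ, en (powW a (m + 1) k))
            ≤ ∑' k : ℤ, ∑' t : ℤ, en (a t) * en (powW a m (k - t)) :=
              ENNReal.tsum_le_tsum step1
          _ = ∑' t : ℤ, ∑' k : ℤ, en (a t) * en (powW a m (k - t)) := ENNReal.tsum_comm
          _ = ∑' t : ℤ, en (a t) * ∑' k : ℤ, en (powW a m (k - t)) :=
              tsum_congr fun t => ENNReal.tsum_mul_left
          _ = ∑' t : ℤ, en (a t) * ∑' u : ℤ, en (powW a m u) := by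
              refine tsum_congr fun t => ?_
              congr 1
              exact (Equiv.subRight t).tsum_eq (f := fun u => en (powW a m u))
          _ ≤ ∑' t : ℤ, en (a t) * (WW a) ^ m :=
              ENNReal.tsum_le_tsum fun t => mul_le_mul_right hble _
          _ = WW a * (WW a) ^ m := ENNReal.tsum_mul_right
      constructor
      · rw [summable_norm_iff_en]
        exact ne_top_of_le_ne_top (ENNReal.mul_ne_top (WW_ne_top ha)
          (ENNReal.pow_ne_top (WW_ne_top ha))) key
      · calc _ ≤ WW a * (WW a) ^ m := key
          _ = (WW a) ^ (m + 1) := (pow_succ' _ _).symm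

lemma en_le_pow {a : ℤ → ℂ} (ha : MemW a) (m : ℕ) (t : ℤ) :
    en (powW a m t) ≤ (WW a) ^ m :=
  le_trans (ENNReal.le_tsum t) (pow_bound ha m).2

def Em (a : ℤ → ℂ) (m : ℕ) : ℕ → ℕ → ℂ :=
  fun i j => matPow (Toep a) m i j - Toep (powW a m) i j

def Phi (a : ℤ → ℂ) (m : ℕ) : ℝ≥0∞ := ∑' p : ℕ × ℕ, en (Em a m p.1 p.2)

lemma Em_col_summable {a : ℤ → ℂ} {m : ℕ} (hΦ : Phi a m ≠ ⊤) (j : ℕ) :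
    Summable fun r : ℕ => ‖Em a m r j‖ := by
  rw [summable_norm_iff_en]
  refine ne_top_of_le_ne_top hΦ ?_
  exact ENNReal.tsum_comp_le_tsum_of_injective
    (f := fun r : ℕ => ((r, j) : ℕ × ℕ)) (fun x y h => by
      simpa using congrArg Prod.fst h) (fun p => en (Em a m p.1 p.2))

lemma Em_succ {a : ℤ → ℂ} (ha : MemW a) {m : ℕ} (hΦ : Phi a m ≠ ⊤) (i j : ℕ) :
    Em a (m + 1) i j
      = matMul (Toep a) (Em a m) i j - matMul (Hminus a) (Hplus (powW a m)) i j := by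
  have hb := (pow_bound ha m).1
  have hA : Summable fun r : ℕ => Toep a i r * Toep (powW a m) r j :=
    summable_toep_row ha hb i j
  have hB : Summable fun r : ℕ => Toep a i r * Em a m r j := by
    apply Summable.of_norm
    refine Summable.of_nonneg_of_le (fun r => norm_nonneg _) (fun r => ?_)
      (((Em_col_summable hΦ j)).mul_left (∑' k, ‖a k‖))
    rw [norm_mul]
    exact mul_le_mul_of_nonneg_right (norm_le_tsum ha _) (norm_nonneg _)
  have key : matPow (Toep a) (m + 1) i j
      = ∑' r : ℕ, (Toep a i r * Toep (powW a m) r j + Toep a i r * Em a m r j) := by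
    show matMul (Toep a) (matPow (Toep a) m) i j = _
    refine tsum_congr fun r => ?_
    simp only [Em]
    ring
  rw [show Em a (m+1) i j = matPow (Toep a) (m+1) i j - Toep (powW a (m+1)) i j from rfl,
    key, Summable.tsum_add hA hB]
  have h1 : ∑' r : ℕ, Toep a i r * Toep (powW a m) r j
      = convW a (powW a m) ((j : ℤ) - i) - matMul (Hminus a) (Hplus (powW a m)) i j :=
    toepMul ha hb i j
  rw [h1]
  have h2 : Toep (powW a (m + 1)) i j = convW a (powW a m) ((j : ℤ) - i) := rfl
  rw [h2]
  have h3 : ∑' r : ℕ, Toep a i r * Em a m r j = matMul (Toep a) (Em a m) i j := rfl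
  rw [h3]
  ring

lemma inner_col_le_WW {a : ℤ → ℂ} (r : ℕ) :
    ∑' i : ℕ, en (a ((r : ℤ) - i)) ≤ WW a :=
  ENNReal.tsum_comp_le_tsum_of_injective
    (f := fun i : ℕ => ((r : ℤ) - i))
    (fun x y h => Nat.cast_injective (sub_right_injective h)) (fun t => en (a t))

lemma double_bound (x y : ℕ → ℕ → ℝ≥0∞) (C : ℝ≥0∞) (hx : ∀ r, ∑' i, x i r ≤ C) :
    ∑' i : ℕ, ∑' j : ℕ, ∑' r : ℕ, x i r * y r j ≤ C * ∑' r : ℕ, ∑' j : ℕ, y r j := by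
  calc ∑' i : ℕ, ∑' j : ℕ, ∑' r : ℕ, x i r * y r j
      = ∑' i : ℕ, ∑' r : ℕ, x i r * ∑' j : ℕ, y r j := by
        refine tsum_congr fun i => ?_
        rw [ENNReal.tsum_comm]
        exact tsum_congr fun r => ENNReal.tsum_mul_left
    _ = ∑' r : ℕ, ∑' i : ℕ, x i r * ∑' j : ℕ, y r j := ENNReal.tsum_comm
    _ = ∑' r : ℕ, (∑' i : ℕ, x i r) * ∑' j : ℕ, y r j :=
        tsum_congr fun r => ENNReal.tsum_mul_right
    _ ≤ ∑' r : ℕ, C * ∑' j : ℕ, y r j :=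
        ENNReal.tsum_le_tsum fun r => mul_le_mul_left (hx r) _
    _ = C * ∑' r : ℕ, ∑' j : ℕ, y r j := ENNReal.tsum_mul_left

lemma double_bound2 (u v : ℕ → ℕ → ℝ≥0∞) (C D : ℝ≥0∞)
    (hv : ∀ s, ∑' j, v s j ≤ D) (hu : ∑' i : ℕ, ∑' s : ℕ, u i s ≤ C) :
    ∑' i : ℕ, ∑' j : ℕ, ∑' s : ℕ, u i s * v s j ≤ C * D := by
  calc ∑' i : ℕ, ∑' j : ℕ, ∑' s : ℕ, u i s * v s j
      = ∑' i : ℕ, ∑' s : ℕ, u i s * ∑' j : ℕ, v s j := by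
        refine tsum_congr fun i => ?_
        rw [ENNReal.tsum_comm]
        exact tsum_congr fun s => ENNReal.tsum_mul_left
    _ ≤ ∑' i : ℕ, ∑' s : ℕ, u i s * D :=
        ENNReal.tsum_le_tsum fun i => ENNReal.tsum_le_tsum fun s =>
          mul_le_mul_right (hv s) _
    _ = (∑' i : ℕ, ∑' s : ℕ, u i s) * D := by
        rw [← ENNReal.tsum_mul_right]
        exact tsum_congr fun i => ENNReal.tsum_mul_right
    _ ≤ C * D := mul_le_mul_left hu D

lemma antidiag_le (a : ℤ → ℂ) :
    ∑' i : ℕ, ∑' s : ℕ, en (a (-((i : ℤ) + s + 1))) ≤ WW' a := by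
  have step1 : ∑' i : ℕ, ∑' s : ℕ, en (a (-((i : ℤ) + s + 1)))
      ≤ ∑' q : ℕ × ℕ, (if q.2 < q.1 then en (a (-(q.1 : ℤ))) else 0) := by
    rw [show ∑' i : ℕ, ∑' s : ℕ, en (a (-((i : ℤ) + s + 1)))
        = ∑' p : ℕ × ℕ, en (a (-((p.1 : ℤ) + p.2 + 1))) from
      (ENNReal.tsum_prod' (f := fun p : ℕ × ℕ => en (a (-((p.1 : ℤ) + p.2 + 1))))).symm]
    have hinj : Function.Injective (fun p : ℕ × ℕ => ((p.1 + p.2 + 1, p.1) : ℕ × ℕ)) := by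
      intro p q h
      simp only [Prod.mk.injEq] at h
      exact Prod.ext (h.2) (by omega)
    have h := ENNReal.tsum_comp_le_tsum_of_injective hinj
      (fun q : ℕ × ℕ => if q.2 < q.1 then en (a (-(q.1 : ℤ))) else 0)
    refine le_trans (le_of_eq (tsum_congr fun p => ?_)) h
    simp only [Function.comp_apply]
    have harg : (-((p.1 : ℤ) + p.2 + 1)) = -((p.1 + p.2 + 1 : ℕ) : ℤ) := by push_cast; ring
    rw [harg, if_pos (by omega : p.1 < p.1 + p.2 + 1)]
  have step2 : ∑' q : ℕ × ℕ, (if q.2 < q.1 then en (a (-(q.1 : ℤ))) else 0)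
      = ∑' k : ℕ, (k : ℝ≥0∞) * en (a (-(k : ℤ))) := by
    rw [ENNReal.tsum_prod']
    refine tsum_congr fun k => ?_
    dsimp only
    rw [tsum_eq_sum (s := Finset.range k)
      (fun b hb => if_neg (by simpa using hb))]
    rw [Finset.sum_congr rfl fun i hi => if_pos (Finset.mem_range.1 hi),
      Finset.sum_const, Finset.card_range, nsmul_eq_mul]
  have step3 : ∑' k : ℕ, (k : ℝ≥0∞) * en (a (-(k : ℤ))) ≤ WW' a := by
    have hinj : Function.Injective (fun k : ℕ => (-(k : ℤ))) :=
      fun x y h => Nat.cast_injective (neg_injective h)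
    have h := ENNReal.tsum_comp_le_tsum_of_injective hinj
      (fun t : ℤ => ((t.natAbs : ℝ≥0∞)) * en (a t))
    refine le_trans (le_of_eq (tsum_congr fun k => ?_)) h
    simp
  exact (step1.trans (le_of_eq step2)).trans step3

lemma Phi_zero (a : ℤ → ℂ) : Phi a 0 = 0 := by
  rw [Phi, ENNReal.tsum_eq_zero]
  rintro ⟨i, j⟩
  have : Em a 0 i j = 0 := by
    simp only [Em, matPow, idMat, Toep, powW]
    by_cases h : i = j
    · simp [h]
    · rw [if_neg h, if_neg (by omega : ¬((j : ℤ) - i = 0))]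
      simp
  simp [this, en]

lemma Phi_succ_le {a : ℤ → ℂ} (ha : MemW a) {m : ℕ} (hΦ : Phi a m ≠ ⊤) :
    Phi a (m + 1) ≤ WW a * Phi a m + WW' a * (WW a) ^ m := by
  have hbd : ∀ p : ℕ × ℕ, en (Em a (m + 1) p.1 p.2)
      ≤ (∑' r : ℕ, en (Toep a p.1 r) * en (Em a m r p.2))
        + ∑' s : ℕ, en (Hminus a p.1 s) * en (Hplus (powW a m) s p.2) := by
    rintro ⟨i, j⟩
    dsimp only
    rw [Em_succ ha hΦ i j]
    have e1 : en (matMul (Toep a) (Em a m) i j)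
        ≤ ∑' r : ℕ, en (Toep a i r) * en (Em a m r j) :=
      le_trans (en_tsum_le _) (le_of_eq (tsum_congr fun r => en_mul _ _))
    have e2 : en (matMul (Hminus a) (Hplus (powW a m)) i j)
        ≤ ∑' s : ℕ, en (Hminus a i s) * en (Hplus (powW a m) s j) :=
      le_trans (en_tsum_le _) (le_of_eq (tsum_congr fun s => en_mul _ _))
    calc en (matMul (Toep a) (Em a m) i j - matMul (Hminus a) (Hplus (powW a m)) i j)
        ≤ en (matMul (Toep a) (Em a m) i j)
          + en (matMul (Hminus a) (Hplus (powW a m)) i j) := by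
          simp only [en]
          rw [← ENNReal.coe_add]
          exact ENNReal.coe_le_coe.2 (nnnorm_sub_le _ _)
      _ ≤ _ := add_le_add e1 e2
  calc Phi a (m + 1)
      ≤ ∑' p : ℕ × ℕ, ((∑' r : ℕ, en (Toep a p.1 r) * en (Em a m r p.2))
        + ∑' s : ℕ, en (Hminus a p.1 s) * en (Hplus (powW a m) s p.2)) :=
        ENNReal.tsum_le_tsum hbd
    _ = (∑' p : ℕ × ℕ, ∑' r : ℕ, en (Toep a p.1 r) * en (Em a m r p.2))
        + ∑' p : ℕ × ℕ, ∑' s : ℕ, en (Hminus a p.1 s) * en (Hplus (powW a m) s p.2) :=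
        ENNReal.tsum_add
    _ ≤ WW a * Phi a m + WW' a * (WW a) ^ m := by
        refine add_le_add ?_ ?_
        · rw [ENNReal.tsum_prod']
          refine le_trans (double_bound (fun i r => en (Toep a i r))
            (fun r j => en (Em a m r j)) (WW a) inner_col_le_WW) ?_
          rw [Phi, ENNReal.tsum_prod']
        · rw [ENNReal.tsum_prod']
          refine double_bound2 (fun i s => en (Hminus a i s))
            (fun s j => en (Hplus (powW a m) s j)) (WW' a) ((WW a) ^ m)
            (fun s => ?_) (antidiag_le a)
          refine le_trans (ENNReal.tsum_comp_le_tsum_of_injective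
            (f := fun j : ℕ => ((s : ℤ) + j + 1))
            (fun x y h => by
              exact_mod_cast add_right_injective (s : ℤ) (add_left_injective (1 : ℤ) h))
            (fun t => en (powW a m t))) (pow_bound ha m).2

lemma Phi_le {a : ℤ → ℂ} (ha : MemW a) (ha' : MemW' a) :
    ∀ m, Phi a m ≤ (m : ℝ≥0∞) * WW' a * (WW a + 1) ^ m := by
  intro m
  induction m with
  | zero => simp [Phi_zero]
  | succ m ih =>
      have hfin : Phi a m ≠ ⊤ :=
        ne_top_of_le_ne_top (ENNReal.mul_ne_top
          (ENNReal.mul_ne_top (ENNReal.natCast_ne_top m) (WW'_ne_top ha'))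
          (ENNReal.pow_ne_top (by
            exact ENNReal.add_ne_top.2 ⟨WW_ne_top ha, ENNReal.one_ne_top⟩))) ih
      calc Phi a (m + 1) ≤ WW a * Phi a m + WW' a * (WW a) ^ m := Phi_succ_le ha hfin
        _ ≤ (WW a + 1) * ((m : ℝ≥0∞) * WW' a * (WW a + 1) ^ m)
            + WW' a * (WW a + 1) ^ (m + 1) := by
            refine add_le_add (mul_le_mul' le_self_add ih) (mul_le_mul_right ?_ _)
            exact le_trans (pow_le_pow_left' le_self_add m)
              (pow_le_pow_right' le_add_self (Nat.le_succ m))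
        _ = ((m : ℝ≥0∞) + 1) * WW' a * (WW a + 1) ^ (m + 1) := by ring
        _ = ((m + 1 : ℕ) : ℝ≥0∞) * WW' a * (WW a + 1) ^ (m + 1) := by push_cast; ring

lemma tsum_fact_ne_top (c : ℝ≥0∞) (hc : c ≠ ⊤) :
    (∑' m : ℕ, ((m.factorial : ℝ≥0∞))⁻¹ * (((m : ℝ≥0∞) + 1) * c ^ m)) ≠ ⊤ := by
  lift c to ℝ≥0 using hc
  have hcoe : ∀ m : ℕ, ((m.factorial : ℝ≥0∞))⁻¹ * (((m : ℝ≥0∞) + 1) * (c : ℝ≥0∞) ^ m)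
      = (((m.factorial : ℝ≥0)⁻¹ * (((m : ℝ≥0) + 1) * c ^ m) : ℝ≥0) : ℝ≥0∞) := by
    intro m
    rw [ENNReal.coe_mul, ENNReal.coe_mul,
      ENNReal.coe_inv (by exact_mod_cast m.factorial_ne_zero), ENNReal.coe_pow]
    norm_cast
  rw [tsum_congr hcoe, ENNReal.tsum_coe_ne_top_iff_summable, ← NNReal.summable_coe]
  have hval : ∀ m : ℕ, (((m.factorial : ℝ≥0)⁻¹ * (((m : ℝ≥0) + 1) * c ^ m) : ℝ≥0) : ℝ)
      = ((m : ℝ) + 1) * (c : ℝ) ^ m / m.factorial := by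
    intro m
    push_cast
    ring
  simp only [hval]
  refine Summable.of_nonneg_of_le (fun m => by positivity) (fun m => ?_)
    (Real.summable_pow_div_factorial (2 * c))
  rw [div_le_div_iff_of_pos_right (by positivity)]
  calc ((m : ℝ) + 1) * (c : ℝ) ^ m ≤ (2 : ℝ) ^ m * (c : ℝ) ^ m := by
        refine mul_le_mul_of_nonneg_right ?_ (by positivity)
        exact_mod_cast Nat.succ_le_of_lt (Nat.lt_two_pow_self (n := m))
    _ = (2 * (c : ℝ)) ^ m := (mul_pow _ _ _).symm

/-- `exp(T(a)) = T(exp(a)) + F` with `‖F‖_ℱ < ∞`: the partial sums of the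
exponential series converge entrywise to `T(exp a) + F` for some `F ∈ ℱ`. -/
theorem stmt13 (a : ℤ → ℂ) (ha : MemW a) (ha' : MemW' a) :
    ∃ F : ℕ → ℕ → ℂ, MemF F ∧
      ∀ i j : ℕ,
        Filter.Tendsto
          (fun k => ∑ m ∈ Finset.range (k + 1),
            (m.factorial : ℂ)⁻¹ * matPow (Toep a) m i j)
          Filter.atTop (nhds (Toep (expW a) i j + F i j)) := by
  have hW : WW a ≠ ⊤ := WW_ne_top ha
  have hW' : WW' a ≠ ⊤ := WW'_ne_top ha'
  have hW1 : WW a + 1 ≠ ⊤ := ENNReal.add_ne_top.2 ⟨hW, ENNReal.one_ne_top⟩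
  have hTot : (∑' m : ℕ, ((m.factorial : ℝ≥0∞))⁻¹ * Phi a m) ≠ ⊤ := by
    have hle : (∑' m : ℕ, ((m.factorial : ℝ≥0∞))⁻¹ * Phi a m)
        ≤ ∑' m : ℕ, WW' a * (((m.factorial : ℝ≥0∞))⁻¹
            * (((m : ℝ≥0∞) + 1) * (WW a + 1) ^ m)) := by
      refine ENNReal.tsum_le_tsum fun m => ?_
      calc ((m.factorial : ℝ≥0∞))⁻¹ * Phi a m
          ≤ ((m.factorial : ℝ≥0∞))⁻¹ * ((m : ℝ≥0∞) * WW' a * (WW a + 1) ^ m) :=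
            mul_le_mul_right (Phi_le ha ha' m) _
        _ = WW' a * (((m.factorial : ℝ≥0∞))⁻¹ * ((m : ℝ≥0∞) * (WW a + 1) ^ m)) := by ring
        _ ≤ WW' a * (((m.factorial : ℝ≥0∞))⁻¹ * (((m : ℝ≥0∞) + 1) * (WW a + 1) ^ m)) :=
            mul_le_mul_right (mul_le_mul_right
              (mul_le_mul_left le_self_add _) _) _
    refine ne_top_of_le_ne_top ?_ hle
    rw [ENNReal.tsum_mul_left]
    exact ENNReal.mul_ne_top hW' (tsum_fact_ne_top _ hW1)
  have hTotP : (∑' p : ℕ × ℕ, ∑' m : ℕ,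
      ((m.factorial : ℝ≥0∞))⁻¹ * en (Em a m p.1 p.2)) ≠ ⊤ := by
    rw [ENNReal.tsum_comm]
    refine ne_top_of_le_ne_top hTot (le_of_eq (tsum_congr fun m => ?_))
    rw [ENNReal.tsum_mul_left]
    rfl
  refine ⟨fun i j => ∑' m : ℕ, (m.factorial : ℂ)⁻¹ * Em a m i j, ?_, ?_⟩
  · rw [MemF, summable_norm_iff_en]
    refine ne_top_of_le_ne_top hTotP (ENNReal.tsum_le_tsum fun p => ?_)
    exact le_trans (en_tsum_le _) (le_of_eq (tsum_congr fun m => en_fact_mul m _))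
  · intro i j
    have hfib : (∑' m : ℕ, ((m.factorial : ℝ≥0∞))⁻¹ * en (Em a m i j)) ≠ ⊤ :=
      ne_top_of_le_ne_top hTotP
        (ENNReal.le_tsum (f := fun p : ℕ × ℕ => ∑' m : ℕ,
          ((m.factorial : ℝ≥0∞))⁻¹ * en (Em a m p.1 p.2)) (i, j))
    have hEs : Summable fun m : ℕ => (m.factorial : ℂ)⁻¹ * Em a m i j := by
      apply Summable.of_norm
      rw [summable_norm_iff_en]
      exact ne_top_of_le_ne_top hfib (le_of_eq (tsum_congr fun m => en_fact_mul m _))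
    have hPs : Summable fun m : ℕ => (m.factorial : ℂ)⁻¹ * powW a m ((j : ℤ) - i) := by
      apply Summable.of_norm
      rw [summable_norm_iff_en]
      refine ne_top_of_le_ne_top (tsum_fact_ne_top (WW a) hW)
        (ENNReal.tsum_le_tsum fun m => ?_)
      rw [en_fact_mul]
      exact mul_le_mul_right (le_trans (en_le_pow ha m _)
        (le_mul_of_one_le_left' le_add_self)) _
    have ht := (hPs.hasSum.add hEs.hasSum).tendsto_sum_nat
    have hrw : ∀ n : ℕ, ∑ m ∈ Finset.range n,
        ((m.factorial : ℂ)⁻¹ * powW a m ((j : ℤ) - i)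
          + (m.factorial : ℂ)⁻¹ * Em a m i j)
        = ∑ m ∈ Finset.range n, (m.factorial : ℂ)⁻¹ * matPow (Toep a) m i j :=
      fun n => Finset.sum_congr rfl fun m _ => by simp only [Em, Toep]; ring
    simp only [hrw] at ht
    exact ht.comp (Filter.tendsto_add_atTop_nat 1)
end
end

section
/- Let $a,a'\in\mathcal W$, $E\in\mathcal F$, $A=T(a)+E$, $D_i=A^i-T(a^i)$, $\xi=\|a\|_{\mathcal W}+\|E\|_{\mathcal F}$, and $\gamma_i=(i-1)\|a\|_{\mathcal W}^{i-2}\|a'\|_{\mathcal W}^2+\|a\|_{\mathcal W}^{i-1}\|E\|_{\mathcal F}$ for $i\ge 1$. Then $\|D_i\|_{\mathcal F}\le\sum_{j=0}^{i-1}\xi^j\gamma_{i-j}$ for all $i\ge 1$. -/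
open scoped BigOperators

noncomputable section

namespace Stmt17Aux

open Function ENNReal
open scoped NNReal

def eF (S : ℕ → ℕ → ℂ) : ℝ≥0∞ := ∑' p : ℕ × ℕ, (‖S p.1 p.2‖₊ : ℝ≥0∞)
def eW (a : ℤ → ℂ) : ℝ≥0∞ := ∑' k : ℤ, (‖a k‖₊ : ℝ≥0∞)
def eW' (a : ℤ → ℂ) : ℝ≥0∞ := ∑' k : ℤ, (k.natAbs : ℝ≥0∞) * (‖a k‖₊ : ℝ≥0∞)

lemma eF_eq (S : ℕ → ℕ → ℂ) : eF S = ∑' (i : ℕ) (j : ℕ), (‖S i j‖₊ : ℝ≥0∞) :=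
  ENNReal.tsum_prod (f := fun i j => (‖S i j‖₊ : ℝ≥0∞))

lemma summable_of_ne_top {ι : Type*} {f : ι → ℂ} (h : (∑' i, (‖f i‖₊ : ℝ≥0∞)) ≠ ⊤) :
    Summable f := by
  have h1 : Summable fun i => ‖f i‖₊ := ENNReal.tsum_coe_ne_top_iff_summable.mp h
  have h2 : Summable fun i => ‖f i‖ := by simpa using NNReal.summable_coe.mpr h1
  exact Summable.of_norm h2

lemma enn_nnnorm_tsum_le {ι : Type*} (f : ι → ℂ) :
    (‖∑' i, f i‖₊ : ℝ≥0∞) ≤ ∑' i, (‖f i‖₊ : ℝ≥0∞) := by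
  by_cases h : (∑' i, (‖f i‖₊ : ℝ≥0∞)) = ⊤
  · exact h ▸ le_top
  · have h1 : Summable fun i => ‖f i‖₊ := ENNReal.tsum_coe_ne_top_iff_summable.mp h
    have h2 : Summable fun i => ‖f i‖ := by simpa using NNReal.summable_coe.mpr h1
    rw [← ENNReal.coe_tsum h1]
    refine ENNReal.coe_le_coe.mpr ?_
    rw [← NNReal.coe_le_coe, coe_nnnorm, NNReal.coe_tsum]
    simpa using norm_tsum_le_tsum_norm h2

lemma tsum_comp_le {ι κ : Type*} (g : κ → ℝ≥0∞) (e : ι → κ) (he : Function.Injective e) :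
    ∑' i, g (e i) ≤ ∑' k, g k :=
  ENNReal.summable.tsum_le_tsum_of_inj e he (fun _ _ => zero_le) (fun _ => le_rfl)
    ENNReal.summable

lemma col_toep (a : ℤ → ℂ) (r : ℕ) :
    (∑' i : ℕ, (‖a ((r : ℤ) - i)‖₊ : ℝ≥0∞)) ≤ eW a :=
  tsum_comp_le (fun k => (‖a k‖₊ : ℝ≥0∞)) (fun i : ℕ => (r : ℤ) - i) (fun x y h => by simpa using h)

lemma row_toep (a : ℤ → ℂ) (r : ℕ) :
    (∑' j : ℕ, (‖a ((j : ℤ) - r)‖₊ : ℝ≥0∞)) ≤ eW a :=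
  tsum_comp_le (fun k => (‖a k‖₊ : ℝ≥0∞)) (fun j : ℕ => (j : ℤ) - r) (fun x y h => by simpa using h)

lemma row_hplus (b : ℤ → ℂ) (r : ℕ) :
    (∑' j : ℕ, (‖b ((r : ℤ) + j + 1)‖₊ : ℝ≥0∞)) ≤ eW' b := by
  refine ENNReal.summable.tsum_le_tsum_of_inj (fun j : ℕ => ((r : ℤ) + j + 1)) (fun x y h => by simpa using h)
    (fun _ _ => zero_le) (fun j => ?_) ENNReal.summable
  refine le_mul_of_one_le_left zero_le ?_
  have h1 : 1 ≤ ((r : ℤ) + j + 1).natAbs := by omega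
  exact_mod_cast Nat.one_le_cast.mpr h1

lemma col_mem (S : ℕ → ℕ → ℂ) (r : ℕ) : (∑' i : ℕ, (‖S i r‖₊ : ℝ≥0∞)) ≤ eF S :=
  tsum_comp_le (fun p : ℕ × ℕ => (‖S p.1 p.2‖₊ : ℝ≥0∞)) (fun i => (i, r))
    (fun x y h => by simpa using h)

lemma row_mem (S : ℕ → ℕ → ℂ) (i : ℕ) : (∑' r : ℕ, (‖S i r‖₊ : ℝ≥0∞)) ≤ eF S :=
  tsum_comp_le (fun p : ℕ × ℕ => (‖S p.1 p.2‖₊ : ℝ≥0∞)) (fun r => (i, r))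
    (fun x y h => by simpa using h)

lemma entry_le_eF (S : ℕ → ℕ → ℂ) (i j : ℕ) : (‖S i j‖₊ : ℝ≥0∞) ≤ eF S :=
  ENNReal.le_tsum ((i, j) : ℕ × ℕ)

lemma entry_le_eW (a : ℤ → ℂ) (k : ℤ) : (‖a k‖₊ : ℝ≥0∞) ≤ eW a :=
  ENNReal.le_tsum k

lemma hminus_total (a : ℤ → ℂ) :
    (∑' p : ℕ × ℕ, (‖a (-((p.1 : ℤ) + p.2 + 1))‖₊ : ℝ≥0∞)) ≤ eW' a := by
  have h1 : (∑' p : ℕ × ℕ, (‖a (-((p.1 : ℤ) + p.2 + 1))‖₊ : ℝ≥0∞))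
      = ∑' n : ℕ, ((n + 1 : ℕ) : ℝ≥0∞) * ‖a (-((n : ℤ) + 1))‖₊ := by
    rw [← Finset.HasAntidiagonal.sigmaAntidiagonalEquivProd.tsum_eq
      (fun p : ℕ × ℕ => (‖a (-((p.1 : ℤ) + p.2 + 1))‖₊ : ℝ≥0∞))]
    rw [ENNReal.tsum_sigma']
    refine tsum_congr fun n => ?_
    rw [tsum_fintype]
    have key : ∀ p : (Finset.HasAntidiagonal.antidiagonal n : Finset (ℕ × ℕ)),
        (‖a (-((((p : ℕ × ℕ)).1 : ℤ) + ((p : ℕ × ℕ)).2 + 1))‖₊ : ℝ≥0∞)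
          = ‖a (-((n : ℤ) + 1))‖₊ := by
      rintro ⟨⟨x, y⟩, hp⟩
      rw [Finset.HasAntidiagonal.mem_antidiagonal] at hp
      have : -((x : ℤ) + y + 1) = -((n : ℤ) + 1) := by omega
      simp [this]
    calc (∑ p : (Finset.HasAntidiagonal.antidiagonal n : Finset (ℕ × ℕ)),
            (‖a (-((((p : ℕ × ℕ)).1 : ℤ) + ((p : ℕ × ℕ)).2 + 1))‖₊ : ℝ≥0∞))
        = ∑ _p : (Finset.HasAntidiagonal.antidiagonal n : Finset (ℕ × ℕ)),
            (‖a (-((n : ℤ) + 1))‖₊ : ℝ≥0∞) := Finset.sum_congr rfl fun p _ => key p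
      _ = ((n + 1 : ℕ) : ℝ≥0∞) * ‖a (-((n : ℤ) + 1))‖₊ := by
          rw [Finset.sum_const, nsmul_eq_mul]
          congr 1
          simp [Finset.Nat.card_antidiagonal]
  rw [h1]
  refine ENNReal.summable.tsum_le_tsum_of_inj (fun n : ℕ => (-((n : ℤ) + 1))) (fun x y h => by simpa using h)
    (fun _ _ => zero_le) (fun n => ?_) ENNReal.summable
  refine le_of_eq ?_
  have h4 : (-((n : ℤ) + 1)).natAbs = n + 1 := by omega
  rw [h4]

lemma eF_matMul_le (X Y : ℕ → ℕ → ℂ) :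
    eF (matMul X Y) ≤
      ∑' r : ℕ, (∑' i : ℕ, (‖X i r‖₊ : ℝ≥0∞)) * ∑' j : ℕ, (‖Y r j‖₊ : ℝ≥0∞) := by
  have h1 : eF (matMul X Y) ≤ ∑' (i : ℕ) (j : ℕ) (r : ℕ), (‖X i r‖₊ : ℝ≥0∞) * ‖Y r j‖₊ := by
    rw [eF_eq]
    refine ENNReal.tsum_le_tsum fun i => ENNReal.tsum_le_tsum fun j => ?_
    refine (enn_nnnorm_tsum_le _).trans_eq (tsum_congr fun r => ?_)
    simp [nnnorm_mul]
  refine h1.trans_eq ?_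
  calc ∑' (i : ℕ) (j : ℕ) (r : ℕ), (‖X i r‖₊ : ℝ≥0∞) * ‖Y r j‖₊
      = ∑' (i : ℕ) (r : ℕ) (j : ℕ), (‖X i r‖₊ : ℝ≥0∞) * ‖Y r j‖₊ :=
        tsum_congr fun i => ENNReal.tsum_comm
    _ = ∑' (i : ℕ) (r : ℕ), (‖X i r‖₊ : ℝ≥0∞) * ∑' j : ℕ, (‖Y r j‖₊ : ℝ≥0∞) :=
        tsum_congr fun i => tsum_congr fun r => ENNReal.tsum_mul_left
    _ = ∑' (r : ℕ) (i : ℕ), (‖X i r‖₊ : ℝ≥0∞) * ∑' j : ℕ, (‖Y r j‖₊ : ℝ≥0∞) :=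
        ENNReal.tsum_comm
    _ = _ := tsum_congr fun r => ENNReal.tsum_mul_right

lemma eF_mul_left (X Y : ℕ → ℕ → ℂ) (C : ℝ≥0∞)
    (hX : ∀ r, (∑' i : ℕ, (‖X i r‖₊ : ℝ≥0∞)) ≤ C) :
    eF (matMul X Y) ≤ C * eF Y := by
  refine (eF_matMul_le X Y).trans ?_
  calc ∑' r : ℕ, (∑' i : ℕ, (‖X i r‖₊ : ℝ≥0∞)) * ∑' j : ℕ, (‖Y r j‖₊ : ℝ≥0∞)
      ≤ ∑' r : ℕ, C * ∑' j : ℕ, (‖Y r j‖₊ : ℝ≥0∞) :=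
        ENNReal.tsum_le_tsum fun r => mul_le_mul_left (hX r) _
    _ = C * ∑' (r : ℕ) (j : ℕ), (‖Y r j‖₊ : ℝ≥0∞) := ENNReal.tsum_mul_left
    _ = C * eF Y := by rw [eF_eq]

lemma eF_mul_toep (S : ℕ → ℕ → ℂ) (b : ℤ → ℂ) :
    eF (matMul S (Toep b)) ≤ eF S * eW b := by
  refine (eF_matMul_le S (Toep b)).trans ?_
  calc ∑' r : ℕ, (∑' i : ℕ, (‖S i r‖₊ : ℝ≥0∞)) * ∑' j : ℕ, (‖Toep b r j‖₊ : ℝ≥0∞)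
      ≤ ∑' r : ℕ, (∑' i : ℕ, (‖S i r‖₊ : ℝ≥0∞)) * eW b :=
        ENNReal.tsum_le_tsum fun r => mul_le_mul_right (row_toep b r) _
    _ = (∑' (r : ℕ) (i : ℕ), (‖S i r‖₊ : ℝ≥0∞)) * eW b := ENNReal.tsum_mul_right
    _ = eF S * eW b := by rw [eF_eq, ENNReal.tsum_comm]

lemma eF_HH (a b : ℤ → ℂ) :
    eF (matMul (Hminus a) (Hplus b)) ≤ eW' a * eW' b := by
  refine (eF_matMul_le _ _).trans ?_
  calc ∑' r : ℕ, (∑' i : ℕ, (‖Hminus a i r‖₊ : ℝ≥0∞)) * ∑' j : ℕ, (‖Hplus b r j‖₊ : ℝ≥0∞)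
      ≤ ∑' r : ℕ, (∑' i : ℕ, (‖Hminus a i r‖₊ : ℝ≥0∞)) * eW' b :=
        ENNReal.tsum_le_tsum fun r => mul_le_mul_right (row_hplus b r) _
    _ = (∑' (r : ℕ) (i : ℕ), (‖Hminus a i r‖₊ : ℝ≥0∞)) * eW' b := ENNReal.tsum_mul_right
    _ ≤ eW' a * eW' b := by
        refine mul_le_mul_left ?_ _
        have h2 : (∑' (r : ℕ) (i : ℕ), (‖Hminus a i r‖₊ : ℝ≥0∞))
            = ∑' p : ℕ × ℕ, (‖a (-((p.1 : ℤ) + p.2 + 1))‖₊ : ℝ≥0∞) := by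
          rw [← ENNReal.tsum_prod]
          refine tsum_congr fun p => ?_
          have h3 : -((p.2 : ℤ) + p.1 + 1) = -((p.1 : ℤ) + p.2 + 1) := by ring
          show (‖a (-((p.2 : ℤ) + p.1 + 1))‖₊ : ℝ≥0∞) = _
          rw [h3]
        rw [h2]
        exact hminus_total a

lemma conv_kernel (F G : ℤ → ℝ≥0∞) :
    (∑' (k : ℤ) (j : ℤ), F j * G (k - j)) = (∑' j : ℤ, F j) * ∑' k : ℤ, G k := by
  rw [ENNReal.tsum_comm]
  calc ∑' (j : ℤ) (k : ℤ), F j * G (k - j)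
      = ∑' j : ℤ, F j * ∑' k : ℤ, G (k - j) := tsum_congr fun j => ENNReal.tsum_mul_left
    _ = ∑' j : ℤ, F j * ∑' k : ℤ, G k := by
        refine tsum_congr fun j => ?_
        congr 1
        have := (Equiv.subRight j).tsum_eq G
        simpa using this
    _ = (∑' j : ℤ, F j) * ∑' k : ℤ, G k := ENNReal.tsum_mul_right

lemma eW_conv (a b : ℤ → ℂ) : eW (convW a b) ≤ eW a * eW b := by
  have h : ∀ k : ℤ, (‖convW a b k‖₊ : ℝ≥0∞) ≤ ∑' j : ℤ, (‖a j‖₊ : ℝ≥0∞) * ‖b (k - j)‖₊ :=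
    fun k => (enn_nnnorm_tsum_le _).trans_eq (tsum_congr fun j => by simp)
  exact (ENNReal.tsum_le_tsum h).trans (conv_kernel _ _).le

lemma eW'_conv (a b : ℤ → ℂ) : eW' (convW a b) ≤ eW' a * eW b + eW a * eW' b := by
  have h : ∀ k : ℤ, (k.natAbs : ℝ≥0∞) * ‖convW a b k‖₊ ≤
      ∑' j : ℤ, (((j.natAbs : ℝ≥0∞) * ‖a j‖₊) * ‖b (k - j)‖₊
        + (‖a j‖₊ : ℝ≥0∞) * (((k - j).natAbs : ℝ≥0∞) * ‖b (k - j)‖₊)) := by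
    intro k
    calc (k.natAbs : ℝ≥0∞) * ‖convW a b k‖₊
        ≤ (k.natAbs : ℝ≥0∞) * ∑' j : ℤ, (‖a j‖₊ : ℝ≥0∞) * ‖b (k - j)‖₊ :=
          mul_le_mul_right ((enn_nnnorm_tsum_le _).trans_eq (tsum_congr fun j => by simp)) _
      _ = ∑' j : ℤ, (k.natAbs : ℝ≥0∞) * ((‖a j‖₊ : ℝ≥0∞) * ‖b (k - j)‖₊) :=
          ENNReal.tsum_mul_left.symm
      _ ≤ _ := by
          refine ENNReal.tsum_le_tsum fun j => ?_
          have hk : (k.natAbs : ℝ≥0∞) ≤ (j.natAbs : ℝ≥0∞) + ((k - j).natAbs : ℝ≥0∞) := by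
            rw [← Nat.cast_add]
            exact Nat.cast_le.mpr (by omega)
          calc (k.natAbs : ℝ≥0∞) * ((‖a j‖₊ : ℝ≥0∞) * ‖b (k - j)‖₊)
              ≤ ((j.natAbs : ℝ≥0∞) + ((k - j).natAbs : ℝ≥0∞))
                  * ((‖a j‖₊ : ℝ≥0∞) * ‖b (k - j)‖₊) := mul_le_mul_left hk _
            _ = _ := by ring
  refine (ENNReal.tsum_le_tsum h).trans ?_
  have split : (∑' (k : ℤ) (j : ℤ), (((j.natAbs : ℝ≥0∞) * ‖a j‖₊) * ‖b (k - j)‖₊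
        + (‖a j‖₊ : ℝ≥0∞) * (((k - j).natAbs : ℝ≥0∞) * ‖b (k - j)‖₊)))
      = (∑' (k : ℤ) (j : ℤ), ((j.natAbs : ℝ≥0∞) * ‖a j‖₊) * ‖b (k - j)‖₊)
        + ∑' (k : ℤ) (j : ℤ), (‖a j‖₊ : ℝ≥0∞) * (((k - j).natAbs : ℝ≥0∞) * ‖b (k - j)‖₊) := by
    simp only [ENNReal.tsum_add]
  rw [split, conv_kernel (fun j => (j.natAbs : ℝ≥0∞) * ‖a j‖₊) (fun m => (‖b m‖₊ : ℝ≥0∞)),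
    conv_kernel (fun j => (‖a j‖₊ : ℝ≥0∞)) (fun m => (m.natAbs : ℝ≥0∞) * ‖b m‖₊)]
  exact le_rfl

lemma eW_pow_zero (a : ℤ → ℂ) : eW (powW a 0) = 1 := by
  rw [eW, tsum_eq_single (0 : ℤ) ?_]
  · simp [powW]
  · intro k hk
    simp [powW, hk]

lemma eW'_pow_zero (a : ℤ → ℂ) : eW' (powW a 0) = 0 := by
  rw [eW']
  have : ∀ k : ℤ, (k.natAbs : ℝ≥0∞) * ‖powW a 0 k‖₊ = 0 := by
    intro k
    rcases eq_or_ne k 0 with rfl | h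
    · simp [powW]
    · simp [powW, h]
  simp [this]

lemma eW_pow (a : ℤ → ℂ) (n : ℕ) : eW (powW a n) ≤ eW a ^ n := by
  induction n with
  | zero => simp [eW_pow_zero]
  | succ n ih =>
    calc eW (powW a (n + 1)) = eW (convW a (powW a n)) := rfl
      _ ≤ eW a * eW (powW a n) := eW_conv _ _
      _ ≤ eW a * eW a ^ n := mul_le_mul_right ih _
      _ = eW a ^ (n + 1) := by ring

lemma eW'_pow (a : ℤ → ℂ) (n : ℕ) :
    eW' (powW a (n + 1)) ≤ ((n + 1 : ℕ) : ℝ≥0∞) * eW a ^ n * eW' a := by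
  induction n with
  | zero =>
    calc eW' (powW a 1) ≤ eW' a * eW (powW a 0) + eW a * eW' (powW a 0) := eW'_conv _ _
      _ = eW' a := by rw [eW_pow_zero, eW'_pow_zero]; simp
      _ ≤ _ := by simp
  | succ n ih =>
    calc eW' (powW a (n + 2)) ≤ eW' a * eW (powW a (n + 1)) + eW a * eW' (powW a (n + 1)) :=
          eW'_conv _ _
      _ ≤ eW' a * eW a ^ (n + 1) + eW a * (((n + 1 : ℕ) : ℝ≥0∞) * eW a ^ n * eW' a) :=
          add_le_add (mul_le_mul_right (eW_pow a (n + 1)) _) (mul_le_mul_right ih _)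
      _ = ((n + 2 : ℕ) : ℝ≥0∞) * eW a ^ (n + 1) * eW' a := by push_cast; ring

lemma eF_add_le (X Y : ℕ → ℕ → ℂ) : eF (X + Y) ≤ eF X + eF Y := by
  rw [eF, eF, eF, ← ENNReal.tsum_add]
  refine ENNReal.tsum_le_tsum fun p => ?_
  simp only [Pi.add_apply]
  rw [← ENNReal.coe_add]
  exact ENNReal.coe_le_coe.mpr (nnnorm_add_le _ _)

lemma eF_sub_le (X Y : ℕ → ℕ → ℂ) : eF (X - Y) ≤ eF X + eF Y := by
  rw [eF, eF, eF, ← ENNReal.tsum_add]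
  refine ENNReal.tsum_le_tsum fun p => ?_
  simp only [Pi.sub_apply]
  rw [← ENNReal.coe_add]
  exact ENNReal.coe_le_coe.mpr (nnnorm_sub_le _ _)

end Stmt17Aux
namespace Stmt17Aux

open Function ENNReal
open scoped NNReal

lemma toep_entry_identity (a b : ℤ → ℂ) (hWa : eW a ≠ ⊤) (hWb : eW b ≠ ⊤) (i j : ℕ) :
    matMul (Toep a) (Toep b) i j
      = Toep (convW a b) i j - matMul (Hminus a) (Hplus b) i j := by
  have hz : Summable fun r : ℤ => a (r - (i : ℤ)) * b ((j : ℤ) - r) := by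
    apply summable_of_ne_top
    have hbound : (∑' r : ℤ, (‖a (r - (i : ℤ)) * b ((j : ℤ) - r)‖₊ : ℝ≥0∞)) ≤ eW a * eW b := by
      calc (∑' r : ℤ, (‖a (r - (i : ℤ)) * b ((j : ℤ) - r)‖₊ : ℝ≥0∞))
          = ∑' r : ℤ, (‖a (r - (i : ℤ))‖₊ : ℝ≥0∞) * ‖b ((j : ℤ) - r)‖₊ :=
            tsum_congr fun r => by simp [nnnorm_mul]
        _ ≤ ∑' r : ℤ, (‖a (r - (i : ℤ))‖₊ : ℝ≥0∞) * eW b :=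
            ENNReal.tsum_le_tsum fun r => mul_le_mul_right (entry_le_eW b _) _
        _ = (∑' r : ℤ, (‖a (r - (i : ℤ))‖₊ : ℝ≥0∞)) * eW b := ENNReal.tsum_mul_right
        _ ≤ eW a * eW b := by
            refine mul_le_mul_left (le_of_eq ?_) _
            have := (Equiv.subRight (i : ℤ)).tsum_eq (fun k => (‖a k‖₊ : ℝ≥0∞))
            simpa [eW] using this
    exact ne_top_of_le_ne_top (ENNReal.mul_ne_top hWa hWb) hbound
  have h1 : Summable fun n : ℕ => a ((n : ℤ) - (i : ℤ)) * b ((j : ℤ) - (n : ℤ)) :=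
    hz.comp_injective (fun x y h => by simpa using h)
  have h2 : Summable fun n : ℕ => a ((-((n : ℤ) + 1)) - (i : ℤ)) * b ((j : ℤ) - (-((n : ℤ) + 1))) :=
    hz.comp_injective (f := fun r : ℤ => a (r - (i : ℤ)) * b ((j : ℤ) - r))
      (i := fun n : ℕ => (-((n : ℤ) + 1))) (fun x y h => by simpa using h)
  have hsplit : (∑' r : ℤ, a (r - (i : ℤ)) * b ((j : ℤ) - r))
      = (∑' n : ℕ, a ((n : ℤ) - (i : ℤ)) * b ((j : ℤ) - (n : ℤ)))
        + ∑' n : ℕ, a ((-((n : ℤ) + 1)) - (i : ℤ)) * b ((j : ℤ) - (-((n : ℤ) + 1))) :=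
    tsum_of_nat_of_neg_add_one (f := fun r : ℤ => a (r - (i : ℤ)) * b ((j : ℤ) - r)) h1 h2
  have lhs_eq : matMul (Toep a) (Toep b) i j
      = ∑' n : ℕ, a ((n : ℤ) - (i : ℤ)) * b ((j : ℤ) - (n : ℤ)) := rfl
  have conv_eq : Toep (convW a b) i j = ∑' r : ℤ, a (r - (i : ℤ)) * b ((j : ℤ) - r) := by
    show convW a b ((j : ℤ) - i) = _
    show (∑' s : ℤ, a s * b ((j : ℤ) - i - s)) = _
    rw [← (Equiv.subRight (i : ℤ)).tsum_eq (fun s : ℤ => a s * b ((j : ℤ) - i - s))]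
    refine tsum_congr fun r => ?_
    show a (r - (i : ℤ)) * b ((j : ℤ) - i - (r - i)) = _
    rw [sub_sub_sub_cancel_right]
  have hm_eq : matMul (Hminus a) (Hplus b) i j
      = ∑' n : ℕ, a ((-((n : ℤ) + 1)) - (i : ℤ)) * b ((j : ℤ) - (-((n : ℤ) + 1))) := by
    refine tsum_congr fun n => ?_
    show a (-((i : ℤ) + n + 1)) * b ((n : ℤ) + j + 1) = _
    rw [show (-((n : ℤ) + 1)) - (i : ℤ) = -((i : ℤ) + n + 1) by ring,
      show (j : ℤ) - (-((n : ℤ) + 1)) = (n : ℤ) + j + 1 by ring]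
  rw [lhs_eq, conv_eq, hm_eq]
  exact eq_sub_of_add_eq hsplit.symm

lemma Dmat_succ (a : ℤ → ℂ) (E : ℕ → ℕ → ℂ) (hWa : eW a ≠ ⊤) (hFE : eF E ≠ ⊤)
    (n : ℕ) (hWb : eW (powW a n) ≠ ⊤)
    (hFD : eF (matPow (Toep a + E) n - Toep (powW a n)) ≠ ⊤) :
    matPow (Toep a + E) (n + 1) - Toep (powW a (n + 1)) =
      matMul (Toep a + E) (matPow (Toep a + E) n - Toep (powW a n))
        - matMul (Hminus a) (Hplus (powW a n)) + matMul E (Toep (powW a n)) := by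
  set A := Toep a + E with hA
  set b := powW a n with hb
  set D := matPow A n - Toep b with hD
  funext i j
  have hAentry : ∀ i r : ℕ, A i r = Toep a i r + E i r := fun i r => rfl
  have hrowA : (∑' r : ℕ, (‖A i r‖₊ : ℝ≥0∞)) ≤ eW a + eF E := by
    calc (∑' r : ℕ, (‖A i r‖₊ : ℝ≥0∞))
        ≤ ∑' r : ℕ, ((‖a ((r : ℤ) - i)‖₊ : ℝ≥0∞) + ‖E i r‖₊) := by
          refine ENNReal.tsum_le_tsum fun r => ?_
          rw [hAentry, ← ENNReal.coe_add]
          exact ENNReal.coe_le_coe.mpr (nnnorm_add_le _ _)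
      _ = (∑' r : ℕ, (‖a ((r : ℤ) - i)‖₊ : ℝ≥0∞)) + ∑' r : ℕ, (‖E i r‖₊ : ℝ≥0∞) :=
          ENNReal.tsum_add
      _ ≤ eW a + eF E := add_le_add (row_toep a i) (row_mem E i)
  have h1 : Summable fun r : ℕ => A i r * D r j := by
    apply summable_of_ne_top
    refine ne_top_of_le_ne_top
      (ENNReal.mul_ne_top (ENNReal.add_ne_top.mpr ⟨hWa, hFE⟩) hFD) ?_
    calc (∑' r : ℕ, (‖A i r * D r j‖₊ : ℝ≥0∞))
        = ∑' r : ℕ, (‖A i r‖₊ : ℝ≥0∞) * ‖D r j‖₊ := tsum_congr fun r => by simp [nnnorm_mul]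
      _ ≤ ∑' r : ℕ, (‖A i r‖₊ : ℝ≥0∞) * eF D :=
          ENNReal.tsum_le_tsum fun r => mul_le_mul_right (entry_le_eF D r j) _
      _ = (∑' r : ℕ, (‖A i r‖₊ : ℝ≥0∞)) * eF D := ENNReal.tsum_mul_right
      _ ≤ _ := mul_le_mul_left hrowA _
  have h2a : Summable fun r : ℕ => Toep a i r * Toep b r j := by
    apply summable_of_ne_top
    refine ne_top_of_le_ne_top (ENNReal.mul_ne_top hWa hWb) ?_
    calc (∑' r : ℕ, (‖Toep a i r * Toep b r j‖₊ : ℝ≥0∞))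
        = ∑' r : ℕ, (‖a ((r : ℤ) - i)‖₊ : ℝ≥0∞) * ‖b ((j : ℤ) - r)‖₊ :=
          tsum_congr fun r => by simp [nnnorm_mul, Toep]
      _ ≤ ∑' r : ℕ, (‖a ((r : ℤ) - i)‖₊ : ℝ≥0∞) * eW b :=
          ENNReal.tsum_le_tsum fun r => mul_le_mul_right (entry_le_eW b _) _
      _ = (∑' r : ℕ, (‖a ((r : ℤ) - i)‖₊ : ℝ≥0∞)) * eW b := ENNReal.tsum_mul_right
      _ ≤ eW a * eW b := mul_le_mul_left (row_toep a i) _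
  have h2b : Summable fun r : ℕ => E i r * Toep b r j := by
    apply summable_of_ne_top
    refine ne_top_of_le_ne_top (ENNReal.mul_ne_top hFE hWb) ?_
    calc (∑' r : ℕ, (‖E i r * Toep b r j‖₊ : ℝ≥0∞))
        = ∑' r : ℕ, (‖E i r‖₊ : ℝ≥0∞) * ‖b ((j : ℤ) - r)‖₊ :=
          tsum_congr fun r => by simp [nnnorm_mul, Toep]
      _ ≤ ∑' r : ℕ, (‖E i r‖₊ : ℝ≥0∞) * eW b :=
          ENNReal.tsum_le_tsum fun r => mul_le_mul_right (entry_le_eW b _) _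
      _ = (∑' r : ℕ, (‖E i r‖₊ : ℝ≥0∞)) * eW b := ENNReal.tsum_mul_right
      _ ≤ eF E * eW b := mul_le_mul_left (row_mem E i) _
  have h2 : Summable fun r : ℕ => A i r * Toep b r j := by
    have hfun : (fun r : ℕ => A i r * Toep b r j)
        = fun r : ℕ => Toep a i r * Toep b r j + E i r * Toep b r j :=
      funext fun r => by rw [hAentry, add_mul]
    rw [hfun]
    exact h2a.add h2b
  have hpow : ∀ r, matPow A n r j = D r j + Toep b r j := fun r => by
    simp [hD]
  have e1 : matMul A (matPow A n) i j
      = matMul A D i j + ∑' r : ℕ, A i r * Toep b r j := by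
    show (∑' r : ℕ, A i r * matPow A n r j) = _
    calc (∑' r : ℕ, A i r * matPow A n r j)
        = ∑' r : ℕ, (A i r * D r j + A i r * Toep b r j) :=
          tsum_congr fun r => by rw [hpow r, mul_add]
      _ = _ := Summable.tsum_add h1 h2
  have e2 : (∑' r : ℕ, A i r * Toep b r j)
      = matMul (Toep a) (Toep b) i j + matMul E (Toep b) i j := by
    calc (∑' r : ℕ, A i r * Toep b r j)
        = ∑' r : ℕ, (Toep a i r * Toep b r j + E i r * Toep b r j) :=
          tsum_congr fun r => by rw [hAentry, add_mul]
      _ = _ := Summable.tsum_add h2a h2b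
  have e3 := toep_entry_identity a b hWa hWb i j
  have e4 : Toep (powW a (n + 1)) i j = Toep (convW a b) i j := rfl
  show (matMul A (matPow A n)) i j - Toep (powW a (n + 1)) i j = _
  simp only [Pi.sub_apply, Pi.add_apply]
  rw [e1, e2, e3, e4]
  ring

lemma Dmat_one (a : ℤ → ℂ) (E : ℕ → ℕ → ℂ) :
    matPow (Toep a + E) 1 - Toep (powW a 1) = E := by
  funext i j
  have h1 : matPow (Toep a + E) 1 i j = (Toep a + E) i j := by
    show (∑' r : ℕ, (Toep a + E) i r * idMat r j) = _
    rw [tsum_eq_single j]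
    · simp [idMat]
    · intro r hr
      simp [idMat, hr]
  have h2 : powW a 1 = a := by
    funext k
    show (∑' s : ℤ, a s * (if k - s = 0 then (1 : ℂ) else 0)) = a k
    rw [tsum_eq_single k]
    · simp
    · intro s hs
      rw [if_neg (by omega), mul_zero]
  simp only [Pi.sub_apply, Pi.add_apply, h1, h2]
  simp [Toep]

end Stmt17Aux
namespace Stmt17Aux

open Function ENNReal
open scoped NNReal

def gam (a : ℤ → ℂ) (E : ℕ → ℕ → ℂ) (m : ℕ) : ℝ≥0∞ :=
  ((m - 1 : ℕ) : ℝ≥0∞) * eW a ^ (m - 2) * eW' a ^ 2 + eW a ^ (m - 1) * eF E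

lemma gam_ne_top {a : ℤ → ℂ} {E : ℕ → ℕ → ℂ} (hWa : eW a ≠ ⊤) (hW'a : eW' a ≠ ⊤)
    (hFE : eF E ≠ ⊤) (m : ℕ) : gam a E m ≠ ⊤ := by
  refine ENNReal.add_ne_top.mpr ⟨?_, ENNReal.mul_ne_top (ENNReal.pow_ne_top hWa) hFE⟩
  exact ENNReal.mul_ne_top (ENNReal.mul_ne_top (ENNReal.natCast_ne_top _)
    (ENNReal.pow_ne_top hWa)) (ENNReal.pow_ne_top hW'a)

lemma rhs_ne_top {a : ℤ → ℂ} {E : ℕ → ℕ → ℂ} (hWa : eW a ≠ ⊤) (hW'a : eW' a ≠ ⊤)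
    (hFE : eF E ≠ ⊤) (m : ℕ) :
    (∑ j ∈ Finset.range m, (eW a + eF E) ^ j * gam a E (m - j)) ≠ ⊤ := by
  rw [← lt_top_iff_ne_top]
  refine ENNReal.sum_lt_top.mpr fun j _ => ?_
  rw [lt_top_iff_ne_top]
  exact ENNReal.mul_ne_top (ENNReal.pow_ne_top (ENNReal.add_ne_top.mpr ⟨hWa, hFE⟩))
    (gam_ne_top hWa hW'a hFE _)

lemma main_enn (a : ℤ → ℂ) (E : ℕ → ℕ → ℂ) (hWa : eW a ≠ ⊤) (hW'a : eW' a ≠ ⊤)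
    (hFE : eF E ≠ ⊤) (n : ℕ) :
    eF (matPow (Toep a + E) (n + 1) - Toep (powW a (n + 1))) ≤
      ∑ j ∈ Finset.range (n + 1), (eW a + eF E) ^ j * gam a E (n + 1 - j) := by
  induction n with
  | zero =>
    rw [Dmat_one]
    simp [gam]
  | succ n ih =>
    have hξ : (eW a + eF E) ≠ ⊤ := ENNReal.add_ne_top.mpr ⟨hWa, hFE⟩
    have hWb : eW (powW a (n + 1)) ≠ ⊤ :=
      ne_top_of_le_ne_top (ENNReal.pow_ne_top hWa) (eW_pow a (n + 1))
    have hFD : eF (matPow (Toep a + E) (n + 1) - Toep (powW a (n + 1))) ≠ ⊤ :=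
      ne_top_of_le_ne_top (rhs_ne_top hWa hW'a hFE (n + 1)) ih
    rw [Dmat_succ a E hWa hFE (n + 1) hWb hFD]
    have hcolA : ∀ r : ℕ, (∑' i : ℕ, (‖(Toep a + E) i r‖₊ : ℝ≥0∞)) ≤ eW a + eF E := by
      intro r
      calc (∑' i : ℕ, (‖(Toep a + E) i r‖₊ : ℝ≥0∞))
          ≤ ∑' i : ℕ, ((‖a ((r : ℤ) - i)‖₊ : ℝ≥0∞) + ‖E i r‖₊) := by
            refine ENNReal.tsum_le_tsum fun i => ?_
            rw [← ENNReal.coe_add]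
            exact ENNReal.coe_le_coe.mpr (nnnorm_add_le _ _)
        _ = (∑' i : ℕ, (‖a ((r : ℤ) - i)‖₊ : ℝ≥0∞)) + ∑' i : ℕ, (‖E i r‖₊ : ℝ≥0∞) :=
            ENNReal.tsum_add
        _ ≤ eW a + eF E := add_le_add (col_toep a r) (col_mem E r)
    have b1 : eF (matMul (Toep a + E) (matPow (Toep a + E) (n + 1) - Toep (powW a (n + 1))))
        ≤ (eW a + eF E) * eF (matPow (Toep a + E) (n + 1) - Toep (powW a (n + 1))) :=
      eF_mul_left _ _ _ hcolA
    have b2 : eF (matMul (Hminus a) (Hplus (powW a (n + 1))))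
        ≤ ((n + 1 : ℕ) : ℝ≥0∞) * eW a ^ n * eW' a ^ 2 := by
      refine (eF_HH a (powW a (n + 1))).trans ?_
      calc eW' a * eW' (powW a (n + 1))
          ≤ eW' a * (((n + 1 : ℕ) : ℝ≥0∞) * eW a ^ n * eW' a) :=
            mul_le_mul_right (eW'_pow a n) _
        _ = ((n + 1 : ℕ) : ℝ≥0∞) * eW a ^ n * eW' a ^ 2 := by ring
    have b3 : eF (matMul E (Toep (powW a (n + 1)))) ≤ eW a ^ (n + 1) * eF E := by
      refine (eF_mul_toep E (powW a (n + 1))).trans ?_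
      calc eF E * eW (powW a (n + 1)) ≤ eF E * eW a ^ (n + 1) :=
            mul_le_mul_right (eW_pow a (n + 1)) _
        _ = eW a ^ (n + 1) * eF E := mul_comm _ _
    have hgam2 : gam a E (n + 2)
        = ((n + 1 : ℕ) : ℝ≥0∞) * eW a ^ n * eW' a ^ 2 + eW a ^ (n + 1) * eF E := rfl
    have hsum : (∑ j ∈ Finset.range (n + 2), (eW a + eF E) ^ j * gam a E (n + 2 - j))
        = gam a E (n + 2)
          + (eW a + eF E) * ∑ j ∈ Finset.range (n + 1), (eW a + eF E) ^ j * gam a E (n + 1 - j) := by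
      rw [Finset.sum_range_succ']
      simp only [pow_zero, one_mul, Nat.sub_zero]
      rw [Finset.mul_sum, add_comm]
      congr 1
      refine Finset.sum_congr rfl fun j hj => ?_
      have h5 : n + 2 - (j + 1) = n + 1 - j := by omega
      rw [h5, pow_succ]
      ring
    calc eF (matMul (Toep a + E) (matPow (Toep a + E) (n + 1) - Toep (powW a (n + 1)))
            - matMul (Hminus a) (Hplus (powW a (n + 1)))
            + matMul E (Toep (powW a (n + 1))))
        ≤ eF (matMul (Toep a + E) (matPow (Toep a + E) (n + 1) - Toep (powW a (n + 1)))
            - matMul (Hminus a) (Hplus (powW a (n + 1))))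
          + eF (matMul E (Toep (powW a (n + 1)))) := eF_add_le _ _
      _ ≤ eF (matMul (Toep a + E) (matPow (Toep a + E) (n + 1) - Toep (powW a (n + 1))))
          + eF (matMul (Hminus a) (Hplus (powW a (n + 1))))
          + eF (matMul E (Toep (powW a (n + 1)))) := add_le_add_left (eF_sub_le _ _) _
      _ ≤ (eW a + eF E) * eF (matPow (Toep a + E) (n + 1) - Toep (powW a (n + 1)))
          + ((n + 1 : ℕ) : ℝ≥0∞) * eW a ^ n * eW' a ^ 2
          + eW a ^ (n + 1) * eF E := add_le_add (add_le_add b1 b2) b3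
      _ ≤ (eW a + eF E) * (∑ j ∈ Finset.range (n + 1), (eW a + eF E) ^ j * gam a E (n + 1 - j))
          + ((n + 1 : ℕ) : ℝ≥0∞) * eW a ^ n * eW' a ^ 2
          + eW a ^ (n + 1) * eF E :=
          add_le_add_left (add_le_add_left (mul_le_mul_right ih _) _) _
      _ = ∑ j ∈ Finset.range (n + 2), (eW a + eF E) ^ j * gam a E (n + 2 - j) := by
          rw [hsum, hgam2]
          ring

lemma memW_coe {a : ℤ → ℂ} (ha : MemW a) : eW a ≠ ⊤ ∧ (eW a).toReal = Wnorm a := by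
  have h1 : Summable fun k => ‖a k‖₊ := by
    rw [← NNReal.summable_coe]
    simpa [MemW] using ha
  have h2 : eW a = ((∑' k, ‖a k‖₊ : ℝ≥0) : ℝ≥0∞) := (ENNReal.coe_tsum h1).symm
  refine ⟨by rw [h2]; exact ENNReal.coe_ne_top, ?_⟩
  rw [h2, ENNReal.coe_toReal, NNReal.coe_tsum, Wnorm]
  simp

lemma memF_coe {S : ℕ → ℕ → ℂ} (hS : MemF S) : eF S ≠ ⊤ ∧ (eF S).toReal = Fnorm S := by
  have h1 : Summable fun p : ℕ × ℕ => ‖S p.1 p.2‖₊ := by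
    rw [← NNReal.summable_coe]
    simpa [MemF] using hS
  have h2 : eF S = ((∑' p : ℕ × ℕ, ‖S p.1 p.2‖₊ : ℝ≥0) : ℝ≥0∞) := (ENNReal.coe_tsum h1).symm
  refine ⟨by rw [h2]; exact ENNReal.coe_ne_top, ?_⟩
  rw [h2, ENNReal.coe_toReal, NNReal.coe_tsum, Fnorm]
  simp

lemma memW'_coe {a : ℤ → ℂ} (ha' : MemW' a) : eW' a ≠ ⊤ ∧ (eW' a).toReal = Wnorm' a := by
  have key : ∀ k : ℤ, |(k : ℝ)| * ‖a k‖ = (((k.natAbs : ℝ≥0) * ‖a k‖₊ : ℝ≥0) : ℝ) := by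
    intro k
    push_cast [Nat.cast_natAbs, Int.cast_abs]
    ring
  have h1 : Summable fun k : ℤ => ((k.natAbs : ℝ≥0) * ‖a k‖₊) := by
    rw [← NNReal.summable_coe]
    refine ha'.congr fun k => ?_
    exact key k
  have h2 : eW' a = ((∑' k, ((k.natAbs : ℝ≥0) * ‖a k‖₊) : ℝ≥0) : ℝ≥0∞) := by
    rw [ENNReal.coe_tsum h1]
    exact tsum_congr fun k => by push_cast; ring
  refine ⟨by rw [h2]; exact ENNReal.coe_ne_top, ?_⟩
  rw [h2, ENNReal.coe_toReal, NNReal.coe_tsum, Wnorm']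
  exact tsum_congr fun k => (key k).symm

lemma memF_of_ne_top {S : ℕ → ℕ → ℂ} (h : eF S ≠ ⊤) : MemF S := by
  have h1 : Summable fun p : ℕ × ℕ => ‖S p.1 p.2‖₊ := ENNReal.tsum_coe_ne_top_iff_summable.mp h
  have := NNReal.summable_coe.mpr h1
  rw [MemF]
  simpa using this

end Stmt17Aux
open Stmt17Aux
open scoped NNReal ENNReal

/-- `‖D_i‖_ℱ ≤ ∑_{j=0}^{i-1} ξ^j γ_{i-j}` with `ξ = ‖a‖_W + ‖E‖_ℱ` and
`γ_m = (m-1)‖a‖_W^{m-2}‖a'‖_W² + ‖a‖_W^{m-1}‖E‖_ℱ`. -/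
theorem stmt17 (a : ℤ → ℂ) (ha : MemW a) (ha' : MemW' a)
    (E : ℕ → ℕ → ℂ) (hE : MemF E) (i : ℕ) (hi : 1 ≤ i) :
    MemF (matPow (Toep a + E) i - Toep (powW a i)) ∧
    Fnorm (matPow (Toep a + E) i - Toep (powW a i)) ≤
      ∑ j ∈ Finset.range i,
        (Wnorm a + Fnorm E) ^ j *
          ((((i - j : ℕ) : ℝ) - 1) * Wnorm a ^ (i - j - 2) * Wnorm' a ^ 2
            + Wnorm a ^ (i - j - 1) * Fnorm E) := by
  obtain ⟨n, rfl⟩ : ∃ n, i = n + 1 := ⟨i - 1, by omega⟩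
  obtain ⟨hWa, hWaR⟩ := memW_coe ha
  obtain ⟨hW'a, hW'aR⟩ := memW'_coe ha'
  obtain ⟨hFE, hFER⟩ := memF_coe hE
  have hmain := main_enn a E hWa hW'a hFE n
  have hRne := rhs_ne_top hWa hW'a hFE (n + 1)
  have hDne : eF (matPow (Toep a + E) (n + 1) - Toep (powW a (n + 1))) ≠ ⊤ :=
    ne_top_of_le_ne_top hRne hmain
  refine ⟨memF_of_ne_top hDne, ?_⟩
  rw [← (memF_coe (memF_of_ne_top hDne)).2]
  refine le_trans (ENNReal.toReal_mono hRne hmain) ?_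
  rw [ENNReal.toReal_sum (fun j _ => ENNReal.mul_ne_top
    (ENNReal.pow_ne_top (ENNReal.add_ne_top.mpr ⟨hWa, hFE⟩)) (gam_ne_top hWa hW'a hFE _))]
  refine le_of_eq (Finset.sum_congr rfl fun j hj => ?_)
  have hj' : j ≤ n := by simpa [Nat.lt_succ_iff] using hj
  have hfin1 : ((n + 1 - j - 1 : ℕ) : ℝ≥0∞) * eW a ^ (n + 1 - j - 2) * eW' a ^ 2 ≠ ⊤ :=
    ENNReal.mul_ne_top (ENNReal.mul_ne_top (ENNReal.natCast_ne_top _)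
      (ENNReal.pow_ne_top hWa)) (ENNReal.pow_ne_top hW'a)
  have hfin2 : eW a ^ (n + 1 - j - 1) * eF E ≠ ⊤ :=
    ENNReal.mul_ne_top (ENNReal.pow_ne_top hWa) hFE
  have e : ((n + 1 - j - 1 : ℕ) : ℝ) = ((n + 1 - j : ℕ) : ℝ) - 1 := by
    have h1 : 1 ≤ n + 1 - j := by omega
    rw [Nat.cast_sub h1]
    simp
  rw [ENNReal.toReal_mul, ENNReal.toReal_pow, ENNReal.toReal_add hWa hFE, hWaR, hFER]
  congr 1
  rw [gam, ENNReal.toReal_add hfin1 hfin2, ENNReal.toReal_mul, ENNReal.toReal_mul,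
    ENNReal.toReal_mul, ENNReal.toReal_pow, ENNReal.toReal_pow, ENNReal.toReal_pow,
    ENNReal.toReal_natCast, hWaR, hW'aR, hFER, e]
end
end
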